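/- arXiv:2604.10779 — 4 statements merged into one kernel-verified Lean document; each statement's English description precedes it below -/
import Mathlib

section
/- For every n ≥ 1 and every permutation π ∈ S_n, met(π) = max over i ∈ {1,...,n} of met(π^i), where π^i denotes the subsequence of the first i entries of π consisting of those entries greater than or equal to π_i (i.e. π^i = π[:i+1]_{≥π_i}). -/
noncomputable section
theorem foldrMaxMem (x : ℕ) (xs : List ℕ) : (x :: xs).foldr max 0 ∈ x :: xs := by
  induction xs generalizing x with
  | nil => simp
  | cons y ys ih =>
    rcases max_choice x ((y :: ys).foldr max 0) with h | h
    · simp only [List.foldr_cons] at h ⊢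
      rw [h]; exact List.mem_cons_self
    · simp only [List.foldr_cons] at h ⊢
      rw [h]; exact List.mem_cons_of_mem _ (ih y)
theorem takeWhileLt (l : List ℕ) (m : ℕ) (hm : m ∈ l) :
    (l.takeWhile (fun y => y ≠ m)).length < l.length := by
  have hd : l.dropWhile (fun y => y ≠ m) ≠ [] := by
    intro h; rw [List.dropWhile_eq_nil_iff] at h; simpa using h m hm
  have h1 : (l.takeWhile (fun y => y ≠ m)).length
      + (l.dropWhile (fun y => y ≠ m)).length = l.length := by
    rw [← List.length_append, List.takeWhile_append_dropWhile]
  have h2 : 0 < (l.dropWhile (fun y => y ≠ m)).length := List.length_pos_iff.mpr hd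
  omega
theorem dropWhileDropLt (l : List ℕ) (m : ℕ) (hl : l ≠ []) :
    ((l.dropWhile (fun y => y ≠ m)).drop 1).length < l.length := by
  have h1 : (l.takeWhile (fun y => y ≠ m)).length
      + (l.dropWhile (fun y => y ≠ m)).length = l.length := by
    rw [← List.length_append, List.takeWhile_append_dropWhile]
  have h2 : 0 < l.length := List.length_pos_iff.mpr hl
  rw [List.length_drop]; omega

/-- West's stack-sorting map `s`: `s([]) = []`, `s(L m R) = s(L) s(R) m` for `m` the maximum. -/
def ss : List ℕ → List ℕ
  | [] => []
  | x :: xs =>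
    ss ((x :: xs).takeWhile (fun y => y ≠ (x :: xs).foldr max 0)) ++
    ss (((x :: xs).dropWhile (fun y => y ≠ (x :: xs).foldr max 0)).drop 1) ++
    [(x :: xs).foldr max 0]
termination_by l => l.length
decreasing_by
  · exact takeWhileLt _ _ (foldrMaxMem _ _)
  · exact dropWhileDropLt _ _ (by simp)

/-- `met π` : the least `k ≥ 0` with `s^k(π)` increasing. -/
def met (l : List ℕ) : ℕ := sInf {k | List.Pairwise (· < ·) (ss^[k] l)}

/-- Right-to-left maxima of a list, read from left to right.  For the prefix of `s^{i-1}(π)`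
before `0` this is exactly the column sequence `C_{π,i}`. -/
def rtlMax : List ℕ → List ℕ
  | [] => []
  | x :: xs => if ∀ y ∈ xs, y < x then x :: rtlMax xs else rtlMax xs

/-- The blocks `b_{π,i,j}`: the segments strictly between consecutive right-to-left maxima. -/
def blocksOf : List ℕ → List (List ℕ)
  | [] => []
  | x :: xs =>
    if ∀ y ∈ xs, y < x then [] :: blocksOf xs
    else
      match blocksOf xs with
      | [] => [[x]]
      | b :: bs => (x :: b) :: bs

/-- The part of `s^{i-1}(π)` strictly before the entry `0`. -/
def prefixAt (π : List ℕ) (i : ℕ) : List ℕ := (ss^[i-1] π).takeWhile (fun x => x ≠ 0)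

/-- The column sequence `C_{π,i}`. -/
def colSeqAt (π : List ℕ) (i : ℕ) : List ℕ := rtlMax (prefixAt π i)

/-- The block sequence `B_{π,i}`. -/
def blocksAt (π : List ℕ) (i : ℕ) : List (List ℕ) := blocksOf (prefixAt π i)

/-- `col_π(v)`: the unique `i` with `v ∈ C_{π,i}` (as the least such `i ≥ 1`). -/
def colOf (π : List ℕ) (v : ℕ) : ℕ := sInf {i | 1 ≤ i ∧ v ∈ colSeqAt π i}

/-- `colpos_π(v)`: the (1-indexed) position of `v` in `C_{π,col_π(v)}`. -/
def colposOf (π : List ℕ) (v : ℕ) : ℕ := (colSeqAt π (colOf π v)).idxOf v + 1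

/-- `leftof_π(v) = c_{π,col_π(v)-1,j}` for the unique `j` with `v = max(b_{π,col_π(v)-1,j})`. -/
def leftOf (π : List ℕ) (v : ℕ) : ℕ :=
  (colSeqAt π (colOf π v - 1)).getD
    (((blocksAt π (colOf π v - 1)).map (fun b => b.foldr max 0)).idxOf v) 0

/-- `row_π(v)`: follow `leftof` back to column 1 and take `colpos` there. -/
def rowOf (π : List ℕ) (v : ℕ) : ℕ := colposOf π ((leftOf π)^[colOf π v - 1] v)

/-- `upof_π(v) = c_{π,col_π(v),colpos_π(v)-1}`. -/
def upOf (π : List ℕ) (v : ℕ) : ℕ := (colSeqAt π (colOf π v)).getD (colposOf π v - 2) 0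

/-- The stack-sorting tableau `T_π(v) = (col_π(v), row_π(v))`. -/
def Tmap (π : List ℕ) (v : ℕ) : ℕ × ℕ := (colOf π v, rowOf π v)

/-- The composition `α_π = (|{v ∈ [n] : row_π(v) = j}|)_{j=1}^{|C_{π,1}|}` (here `n = |π| - 1`). -/
def alphaOf (π : List ℕ) : List ℕ :=
  (List.range' 1 (colSeqAt π 1).length).map
    (fun j => ((Finset.Icc 1 (π.length - 1)).filter (fun v => rowOf π v = j)).card)

/-- Membership in the composition diagram `D(α) = {(i,j) : 1 ≤ j ≤ ℓ(α), 1 ≤ i ≤ α_j}`. -/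
def inDiagram (α : List ℕ) (p : ℕ × ℕ) : Prop :=
  1 ≤ p.1 ∧ 1 ≤ p.2 ∧ p.2 ≤ α.length ∧ p.1 ≤ α.getD (p.2 - 1) 0

instance inDiagramDec (α : List ℕ) : DecidablePred (inDiagram α) := fun p => by
  unfold inDiagram; infer_instance

/-- `D(α)` as a finite set. -/
def diagramFinset (α : List ℕ) : Finset (ℕ × ℕ) :=
  (Finset.range (α.foldr max 0 + 1) ×ˢ Finset.range (α.length + 1)).filter
    (fun p => inDiagram α p)

/-- `colpos_α(i,j) = |{(i,j') ∈ D(α) : j' < j} ∪ {(i,0)}|`. -/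
def colposA (α : List ℕ) (p : ℕ × ℕ) : ℕ :=
  (((Finset.range p.2).filter (fun j' => inDiagram α (p.1, j'))) ∪ {0}).card

/-- `leftof_α(i,j) = (i-1,j)`. -/
def leftA (p : ℕ × ℕ) : ℕ × ℕ := (p.1 - 1, p.2)

/-- `upof_α(i,j) = (i, max({j' < j : (i,j') ∈ D(α)} ∪ {0}))`. -/
def upA (α : List ℕ) (p : ℕ × ℕ) : ℕ × ℕ :=
  (p.1, (((Finset.range p.2).filter (fun j' => inDiagram α (p.1, j'))) ∪ {0}).sup id)

/-- The hook length `h_α(i,j)`. -/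
def hook (α : List ℕ) (p : ℕ × ℕ) : ℕ :=
  if 1 < p.1 then
    ((diagramFinset α).filter (fun q =>
      q.1 ≤ p.1 - 1 ∧ (upA α (p.1 - 1, p.2)).2 < q.2 ∧ q.2 ≤ p.2)).card
  else 1

/-- The segment `B_{π,T}(i,j,k)` of `s^{k-1}(π)`, where `U = T⁻¹`. -/
def Bseg (π : List ℕ) (α : List ℕ) (U : ℕ × ℕ → ℕ) (i j k : ℕ) : List ℕ :=
  if (upA α (leftA (i, j))).2 > 0 then
    ((ss^[k-1] π).take ((ss^[k-1] π).idxOf (U (k, j)) + 1)).drop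
      ((ss^[k-1] π).idxOf (U (k, (upA α (leftA (i, j))).2)) + 1)
  else
    (ss^[k-1] π).take ((ss^[k-1] π).idxOf (U (k, j)) + 1)

/-- The inverse `T_π⁻¹` of the stack-sorting tableau. -/
def invTmap (π : List ℕ) : ℕ × ℕ → ℕ :=
  Function.invFunOn (Tmap π) (Set.Icc 1 (π.length - 1))

/-- A linear extension of `D(α)`, encoded as the list `[T(1), …, T(n)]`:
`T` is a bijection `{1,…,n} → D(α)` with `T(a) ≥_D T(b) → a ≥ b`. -/
def isLinExt (α : List ℕ) (ℓ : List (ℕ × ℕ)) : Prop :=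
  ℓ.Nodup ∧ (∀ p, p ∈ ℓ ↔ inDiagram α p) ∧
  ∀ a b, a < ℓ.length → b < ℓ.length →
    (ℓ.getD a (0, 0)).1 ≤ (ℓ.getD b (0, 0)).1 ∧ (ℓ.getD a (0, 0)).2 ≤ (ℓ.getD b (0, 0)).2 →
    b ≤ a
end

namespace StmtAux

lemma le_foldr_max {x : ℕ} {l : List ℕ} (h : x ∈ l) : x ≤ l.foldr max 0 := by
  induction l with
  | nil => simp at h
  | cons y ys ih =>
    rcases List.mem_cons.mp h with rfl | h
    · simp only [List.foldr_cons]; exact le_max_left _ _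
    · simp only [List.foldr_cons]; exact le_max_of_le_right (ih h)

lemma foldr_max_le {M : ℕ} {l : List ℕ} (h : ∀ y ∈ l, y ≤ M) : l.foldr max 0 ≤ M := by
  induction l with
  | nil => simp
  | cons y ys ih =>
    simp only [List.foldr_cons]
    exact max_le (h y (by simp)) (ih fun z hz => h z (by simp [hz]))

lemma foldr_max_eq {M : ℕ} {l : List ℕ} (hm : M ∈ l) (h : ∀ y ∈ l, y ≤ M) :
    l.foldr max 0 = M :=
  le_antisymm (foldr_max_le h) (le_foldr_max hm)

lemma takeWhile_split {A B : List ℕ} {M : ℕ} (hA : ∀ a ∈ A, a ≠ M) :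
    (A ++ M :: B).takeWhile (fun y => y ≠ M) = A := by
  induction A with
  | nil => simp [List.takeWhile]
  | cons a as ih =>
    have ha : a ≠ M := hA a (by simp)
    have h2 := ih (fun z hz => hA z (by simp [hz]))
    simp only [ne_eq, decide_not] at h2 ⊢
    simp only [List.cons_append, List.takeWhile]
    simp [ha, h2]

lemma dropWhile_split {A B : List ℕ} {M : ℕ} (hA : ∀ a ∈ A, a ≠ M) :
    (A ++ M :: B).dropWhile (fun y => y ≠ M) = M :: B := by
  induction A with
  | nil => simp [List.dropWhile]
  | cons a as ih =>
    have ha : a ≠ M := hA a (by simp)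
    have h2 := ih (fun z hz => hA z (by simp [hz]))
    simp only [ne_eq, decide_not] at h2 ⊢
    simp only [List.cons_append, List.dropWhile]
    simp [ha, h2]

theorem ss_eq {A B : List ℕ} {M : ℕ} (hA : ∀ a ∈ A, a < M) (hB : ∀ b ∈ B, b < M) :
    ss (A ++ M :: B) = ss A ++ ss B ++ [M] := by
  have hmax : (A ++ M :: B).foldr max 0 = M := by
    refine foldr_max_eq (by simp) ?_
    intro y hy
    rcases List.mem_append.mp hy with h | h
    · exact (hA y h).le
    · rcases List.mem_cons.mp h with rfl | h
      · exact le_rfl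
      · exact (hB y h).le
  have hAne : ∀ a ∈ A, a ≠ M := fun a ha => (hA a ha).ne
  have key : ∀ (x : ℕ) (xs : List ℕ), x :: xs = A ++ M :: B →
      ss (x :: xs) = ss A ++ ss B ++ [M] := by
    intro x xs h
    rw [ss, h, hmax, takeWhile_split hAne, dropWhile_split hAne]
    simp
  cases A with
  | nil => exact key _ _ rfl
  | cons a as => exact key _ _ rfl

end StmtAux
namespace StmtAux

lemma dropWhile_head {l : List ℕ} {M : ℕ} (hm : M ∈ l) :
    ∃ D, l.dropWhile (fun y => y ≠ M) = M :: D := by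
  have hne : l.dropWhile (fun y => y ≠ M) ≠ [] := by
    intro h; rw [List.dropWhile_eq_nil_iff] at h; simpa using h M hm
  obtain ⟨c, D, hcD⟩ := List.exists_cons_of_ne_nil hne
  have hc : ¬ (c ≠ M) := by
    have := List.head_dropWhile_not (fun y => decide (y ≠ M)) (l := l) (by simpa using hne)
    simp only [hcD, List.head_cons] at this
    simpa using this
  push_neg at hc
  exact ⟨D, by rw [hcD, hc]⟩

theorem ss_perm (l : List ℕ) : (ss l).Perm l := by
  induction l using ss.induct with
  | case1 => simp [ss]
  | case2 x xs ih1 ih2 =>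
    set l := x :: xs with hl
    set M := l.foldr max 0 with hM
    obtain ⟨D, hD⟩ := dropWhile_head (l := l) (M := M) (foldrMaxMem x xs)
    have hsplit : l = l.takeWhile (fun y => y ≠ M) ++ M :: D := by
      conv_lhs => rw [← List.takeWhile_append_dropWhile (p := fun y => decide (y ≠ M)) (l := l)]
      rw [hD]
    have hdrop1 : (l.dropWhile (fun y => y ≠ M)).drop 1 = D := by rw [hD]; simp
    rw [ss]
    rw [hdrop1] at ih2 ⊢
    have p1 : (ss (l.takeWhile fun y => y ≠ M) ++ ss D ++ [M]).Perm
        ((l.takeWhile fun y => y ≠ M) ++ D ++ [M]) :=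
      (ih1.append ih2).append (List.Perm.refl [M])
    have p2 : ((l.takeWhile fun y => y ≠ M) ++ D ++ [M]).Perm
        ((l.takeWhile fun y => y ≠ M) ++ M :: D) := by
      rw [List.append_assoc]
      exact List.Perm.append_left _ (List.perm_append_singleton M D)
    have p3 : ((l.takeWhile fun y => y ≠ M) ++ M :: D).Perm l := by
      rw [← hsplit]
    exact (p1.trans p2).trans p3

end StmtAux
namespace StmtAux

theorem ss_decomp {l : List ℕ} (hne : l ≠ []) (hnd : l.Nodup) :
    ∃ A M B, l = A ++ M :: B ∧ (∀ a ∈ A, a < M) ∧ (∀ b ∈ B, b < M) ∧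
      ss l = ss A ++ ss B ++ [M] := by
  obtain ⟨x, xs, rfl⟩ := List.exists_cons_of_ne_nil hne
  set M := (x :: xs).foldr max 0 with hM
  have hmem : M ∈ x :: xs := foldrMaxMem x xs
  obtain ⟨A, B, hAB⟩ := List.append_of_mem hmem
  have hle : ∀ y ∈ x :: xs, y ≤ M := fun y hy => le_foldr_max hy
  rw [hAB] at hnd hle
  have hMA : M ∉ A := by
    intro hA
    exact (List.nodup_append'.mp hnd).2.2 hA (by simp)
  have hMB : M ∉ B := by
    have := (List.nodup_append.mp hnd).2.1
    simp only [List.nodup_cons] at this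
    exact this.1
  refine ⟨A, M, B, hAB, ?_, ?_, ?_⟩
  · intro a ha
    exact lt_of_le_of_ne (hle a (by simp [ha])) (fun h => hMA (h ▸ ha))
  · intro b hb
    exact lt_of_le_of_ne (hle b (by simp [hb])) (fun h => hMB (h ▸ hb))
  · rw [hAB]
    exact ss_eq (fun a ha => lt_of_le_of_ne (hle a (by simp [ha])) (fun h => hMA (h ▸ ha)))
      (fun b hb => lt_of_le_of_ne (hle b (by simp [hb])) (fun h => hMB (h ▸ hb)))

lemma ss_nodup {l : List ℕ} (h : l.Nodup) : (ss l).Nodup := ((ss_perm l).nodup_iff).mpr h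

lemma ss_iter_perm (k : ℕ) (l : List ℕ) : (ss^[k] l).Perm l := by
  induction k with
  | zero => simp
  | succ k ih =>
    rw [Function.iterate_succ_apply']
    exact (ss_perm _).trans ih

lemma ss_iter_nodup {l : List ℕ} (h : l.Nodup) (k : ℕ) : (ss^[k] l).Nodup :=
  ((ss_iter_perm k l).nodup_iff).mpr h

theorem ss_sorted_eq {l : List ℕ} (h : List.Pairwise (· < ·) l) : ss l = l := by
  induction l using List.reverseRecOn with
  | nil => simp [ss]
  | append_singleton A M ih =>
    have hs := List.pairwise_append.mp h
    have hA : ∀ a ∈ A, a < M := fun a ha => hs.2.2 a ha M (by simp)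
    have : ss (A ++ M :: []) = ss A ++ ss [] ++ [M] := ss_eq hA (by simp)
    simpa [ss, ih hs.1] using this

lemma ss_iter_sorted_eq {l : List ℕ} (h : List.Pairwise (· < ·) l) (k : ℕ) : ss^[k] l = l := by
  induction k with
  | zero => simp
  | succ k ih => rw [Function.iterate_succ_apply', ih, ss_sorted_eq h]

lemma sorted_mono {l : List ℕ} {k j : ℕ} (h : List.Pairwise (· < ·) (ss^[k] l)) (hkj : k ≤ j) :
    List.Pairwise (· < ·) (ss^[j] l) := by
  have : ss^[j] l = ss^[j - k] (ss^[k] l) := by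
    rw [← Function.iterate_add_apply]
    congr 1
    omega
  rw [this, ss_iter_sorted_eq h]
  exact h

lemma ss_iter_append_max {C : List ℕ} {M : ℕ} (hC : ∀ y ∈ C, y < M) (k : ℕ) :
    ss^[k] (C ++ [M]) = ss^[k] C ++ [M] := by
  induction k with
  | zero => simp
  | succ k ih =>
    rw [Function.iterate_succ_apply', Function.iterate_succ_apply', ih]
    have hC' : ∀ y ∈ ss^[k] C, y < M := fun y hy => hC y ((ss_iter_perm k C).mem_iff.mp hy)
    have := ss_eq (A := ss^[k] C) (B := []) (M := M) hC' (by simp)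
    simpa [ss] using this

theorem exists_sorted : ∀ (n : ℕ) (l : List ℕ), l.length ≤ n → l.Nodup →
    ∃ k, List.Pairwise (· < ·) (ss^[k] l) := by
  intro n
  induction n with
  | zero =>
    intro l hl _
    have : l = [] := List.length_eq_zero_iff.mp (Nat.le_zero.mp hl)
    exact ⟨0, by simp [this]⟩
  | succ n ih =>
    intro l hl hnd
    rcases eq_or_ne l [] with rfl | hne
    · exact ⟨0, by simp⟩
    obtain ⟨A, M, B, hABl, hA, hB, hss⟩ := ss_decomp hne hnd
    set C : List ℕ := ss A ++ ss B with hC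
    have hCperm : C.Perm (A ++ B) := (ss_perm A).append (ss_perm B)
    have hCnd : C.Nodup := hCperm.nodup_iff.mpr (by
      have : (A ++ B).Sublist l := by
        rw [hABl]
        exact (List.sublist_cons_self M B).append_left A
      exact this.nodup hnd)
    have hClen : C.length ≤ n := by
      have h1 : C.length = A.length + B.length := by
        simp [hC, ((ss_perm A).length_eq), ((ss_perm B).length_eq)]
      have h2 : l.length = A.length + B.length + 1 := by simp [hABl]; omega
      omega
    obtain ⟨k, hk⟩ := ih C hClen hCnd
    refine ⟨k + 1, ?_⟩
    have hCM : ∀ y ∈ C, y < M := by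
      intro y hy
      rcases List.mem_append.mp (hCperm.mem_iff.mp hy) with h | h
      · exact hA y h
      · exact hB y h
    rw [Function.iterate_succ_apply, hss]
    have : ss A ++ ss B ++ [M] = C ++ [M] := by rw [hC]
    rw [this, ss_iter_append_max hCM k]
    rw [List.pairwise_append]
    refine ⟨hk, by simp, ?_⟩
    intro a ha b hb
    simp only [List.mem_singleton] at hb
    subst hb
    exact hCM a ((ss_iter_perm k C).mem_iff.mp ha)

end StmtAux
namespace StmtAux

lemma pair_sublist_append {a b : ℕ} {X Y : List ℕ} (h : ([a, b] : List ℕ).Sublist (X ++ Y)) :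
    ([a, b] : List ℕ).Sublist X ∨ ([a, b] : List ℕ).Sublist Y ∨ (a ∈ X ∧ b ∈ Y) := by
  rw [List.sublist_append_iff] at h
  obtain ⟨l₁, l₂, heq, h1, h2⟩ := h
  match l₁, heq, h1 with
  | [], heq, h1 =>
    right; left
    simp only [List.nil_append] at heq
    exact heq ▸ h2
  | [x], heq, h1 =>
    right; right
    simp only [List.singleton_append, List.cons.injEq] at heq
    obtain ⟨rfl, heq2⟩ := heq
    refine ⟨List.singleton_sublist.mp h1, ?_⟩
    exact h2.subset (by simp [← heq2])
  | x :: y :: t, heq, h1 =>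
    left
    simp only [List.cons_append, List.cons.injEq] at heq
    obtain ⟨rfl, rfl, heq3⟩ := heq
    have ht : t = [] := by
      have := congrArg List.length heq3
      simp at this
      exact List.length_eq_zero_iff.mp (by omega)
    subst ht
    exact h1

lemma pair_sublist_of_mem {a b : ℕ} {X Y : List ℕ} (ha : a ∈ X) (hb : b ∈ Y) :
    ([a, b] : List ℕ).Sublist (X ++ Y) := by
  have : ([a] ++ [b] : List ℕ).Sublist (X ++ Y) :=
    (List.singleton_sublist.mpr ha).append (List.singleton_sublist.mpr hb)
  simpa using this

lemma not_pair_sublist_singleton {a b M : ℕ} (h : ([a, b] : List ℕ).Sublist [M]) : False := by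
  have := h.length_le
  simp at this

theorem ss_inversion : ∀ (n : ℕ) (l : List ℕ), l.length ≤ n → l.Nodup → ∀ a b : ℕ, b < a →
    ([a, b] : List ℕ).Sublist (ss l) → ([a, b] : List ℕ).Sublist l := by
  intro n
  induction n with
  | zero =>
    intro l hl _ a b _ hs
    have : l = [] := List.length_eq_zero_iff.mp (Nat.le_zero.mp hl)
    subst this
    simp [ss] at hs
  | succ n ih =>
    intro l hl hnd a b hba hs
    rcases eq_or_ne l [] with rfl | hne
    · simp [ss] at hs
    obtain ⟨A, M, B, hABl, hA, hB, hss⟩ := ss_decomp hne hnd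
    have hlen : A.length ≤ n ∧ B.length ≤ n := by
      have : l.length = A.length + B.length + 1 := by simp [hABl]; omega
      omega
    have hndA : A.Nodup := by
      rw [hABl] at hnd; exact (List.nodup_append.mp hnd).1
    have hndB : B.Nodup := by
      rw [hABl] at hnd
      have := (List.nodup_append.mp hnd).2.1
      exact (List.nodup_cons.mp this).2
    rw [hss] at hs
    rcases pair_sublist_append hs with h | h | ⟨hmem1, hmem2⟩
    · rcases pair_sublist_append h with h2 | h2 | ⟨hm1, hm2⟩
      · have := ih A hlen.1 hndA a b hba h2
        rw [hABl]
        exact this.trans (List.sublist_append_left A (M :: B))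
      · have := ih B hlen.2 hndB a b hba h2
        rw [hABl]
        exact (this.trans (List.sublist_cons_self M B)).trans
          (List.sublist_append_right A (M :: B))
      · rw [hABl]
        have ha : a ∈ A := (ss_perm A).mem_iff.mp hm1
        have hb : b ∈ M :: B := by
          simp [List.mem_cons, (ss_perm B).mem_iff.mp hm2]
        exact pair_sublist_of_mem ha hb
    · exact (not_pair_sublist_singleton h).elim
    · -- b = M, contradiction since a < M
      have hbM : b = M := by simpa using hmem2
      have haM : a < M := by
        rcases List.mem_append.mp ((((ss_perm A).append (ss_perm B)).mem_iff).mp hmem1) with h | h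
        · exact hA a h
        · exact hB a h
      omega

lemma ss_iter_inversion {l : List ℕ} (hnd : l.Nodup) {a b : ℕ} (hba : b < a) (k : ℕ)
    (h : ([a, b] : List ℕ).Sublist (ss^[k] l)) : ([a, b] : List ℕ).Sublist l := by
  induction k with
  | zero => simpa using h
  | succ k ihk =>
    rw [Function.iterate_succ_apply'] at h
    exact ihk (ss_inversion (ss^[k] l).length (ss^[k] l) le_rfl (ss_iter_nodup hnd k) a b hba h)

lemma exists_inversion_of_not_sorted {l : List ℕ} (hnd : l.Nodup)
    (hs : ¬ List.Pairwise (· < ·) l) : ∃ a b : ℕ, b < a ∧ ([a, b] : List ℕ).Sublist l := by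
  induction l with
  | nil => simp at hs
  | cons x xs ih =>
    rw [List.pairwise_cons] at hs
    by_cases hAll : ∀ y ∈ xs, x < y
    · have hxs : ¬ List.Pairwise (· < ·) xs := by tauto
      obtain ⟨a, b, hba, hsub⟩ := ih (List.nodup_cons.mp hnd).2 hxs
      exact ⟨a, b, hba, hsub.cons x⟩
    · push_neg at hAll
      obtain ⟨y, hy, hxy⟩ := hAll
      have hne : y ≠ x := fun h' => (List.nodup_cons.mp hnd).1 (h' ▸ hy)
      refine ⟨x, y, by omega, ?_⟩
      exact (List.singleton_sublist.mpr hy).cons₂ x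

lemma sorted_pair_lt {l : List ℕ} (h : List.Pairwise (· < ·) l) {a b : ℕ}
    (hsub : ([a, b] : List ℕ).Sublist l) : a < b := by
  have := List.Pairwise.sublist hsub h
  rw [List.pairwise_cons] at this
  exact this.1 b (by simp)

lemma pair_sublist_split {a b : ℕ} : ∀ {l : List ℕ}, ([a, b] : List ℕ).Sublist l →
    ∃ X Y, l = X ++ a :: Y ∧ b ∈ Y := by
  intro l h
  induction l with
  | nil => exact absurd h.length_le (by simp)
  | cons x xs ih =>
    rcases h with _ | h | h
    case cons h' =>
      obtain ⟨X, Y, hXY, hbY⟩ := ih h'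
      exact ⟨x :: X, Y, by rw [hXY]; rfl, hbY⟩
    case cons.cons_cons h' =>
      exact ⟨[], xs, rfl, List.singleton_sublist.mp h'⟩

end StmtAux
namespace StmtAux

def Cond (p : ℕ → Bool) (l : List ℕ) : Prop :=
  ∀ d s : ℕ, ([d, s] : List ℕ).Sublist l → p d = false → p s = true → d < s

lemma Cond.sublist {p : ℕ → Bool} {l l' : List ℕ} (h : Cond p l) (hsub : l'.Sublist l) :
    Cond p l' := fun d s hds hd hs => h d s (hds.trans hsub) hd hs

theorem ss_restrict : ∀ (n : ℕ) (l : List ℕ), l.length ≤ n → l.Nodup → ∀ p : ℕ → Bool,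
    Cond p l → ss (l.filter p) = (ss l).filter p ∧ Cond p (ss l) := by
  intro n
  induction n with
  | zero =>
    intro l hl _ p _
    have : l = [] := List.length_eq_zero_iff.mp (Nat.le_zero.mp hl)
    subst this
    exact ⟨by simp [ss], fun d s hds _ _ => absurd hds.length_le (by simp [ss])⟩
  | succ n ih =>
    intro l hl hnd p hc
    rcases eq_or_ne l [] with rfl | hne
    · exact ⟨by simp [ss], fun d s hds _ _ => absurd (hds.length_le) (by simp [ss])⟩
    obtain ⟨A, M, B, hABl, hA, hB, hss⟩ := ss_decomp hne hnd
    have hlen : A.length ≤ n ∧ B.length ≤ n := by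
      have : l.length = A.length + B.length + 1 := by simp [hABl]; omega
      omega
    have hndA : A.Nodup := by
      rw [hABl] at hnd; exact (List.nodup_append.mp hnd).1
    have hndB : B.Nodup := by
      rw [hABl] at hnd
      exact (List.nodup_cons.mp (List.nodup_append.mp hnd).2.1).2
    have hsubA : A.Sublist l := hABl ▸ List.sublist_append_left A (M :: B)
    have hsubMB : (M :: B).Sublist l := hABl ▸ List.sublist_append_right A (M :: B)
    have hsubB : B.Sublist l := (List.sublist_cons_self M B).trans hsubMB
    obtain ⟨ihA1, ihA2⟩ := ih A hlen.1 hndA p (hc.sublist hsubA)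
    obtain ⟨ihB1, ihB2⟩ := ih B hlen.2 hndB p (hc.sublist hsubB)
    have hfA : ∀ a ∈ A.filter p, a < M := fun a ha => hA a (List.mem_of_mem_filter ha)
    have hfB : ∀ b ∈ B.filter p, b < M := fun b hb => hB b (List.mem_of_mem_filter hb)
    constructor
    · -- filter equation
      by_cases hpM : p M = true
      · have h1 : l.filter p = A.filter p ++ M :: B.filter p := by
          rw [hABl, List.filter_append, List.filter_cons, if_pos hpM]
        rw [h1, ss_eq hfA hfB, hss, List.filter_append, List.filter_append,
          List.filter_cons, if_pos hpM, ihA1, ihB1]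
        simp
      · have hpM' : p M = false := by simpa using hpM
        have hBfil : B.filter p = [] := by
          rw [List.filter_eq_nil_iff]
          intro b hb
          intro hpb
          have : M < b := hc M b (by
            have : ([M, b] : List ℕ).Sublist (M :: B) :=
              (List.singleton_sublist.mpr hb).cons₂ M
            exact this.trans hsubMB) hpM' hpb
          exact absurd (hB b hb) (by omega)
        have hssBfil : (ss B).filter p = [] := by
          rw [List.filter_eq_nil_iff]
          intro b hb
          have hbB : b ∈ B := (ss_perm B).mem_iff.mp hb
          have := List.filter_eq_nil_iff.mp hBfil b hbB
          simpa using this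
        have h1 : l.filter p = A.filter p := by
          rw [hABl, List.filter_append, List.filter_cons, if_neg (by simp [hpM']), hBfil]
          simp
        rw [h1, hss, List.filter_append, List.filter_append, ihA1, hssBfil,
          List.filter_cons, if_neg (by simp [hpM'])]
        simp
    · -- Cond preserved
      intro d s hds hd hs
      rw [hss] at hds
      rcases pair_sublist_append hds with h | h | ⟨hmem1, hmem2⟩
      · rcases pair_sublist_append h with h2 | h2 | ⟨hm1, hm2⟩
        · exact ihA2 d s h2 hd hs
        · exact ihB2 d s h2 hd hs
        · have hdA : d ∈ A := (ss_perm A).mem_iff.mp hm1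
          have hsB : s ∈ B := (ss_perm B).mem_iff.mp hm2
          refine hc d s ?_ hd hs
          rw [hABl]
          exact pair_sublist_of_mem hdA (by simp [hsB])
      · exact (not_pair_sublist_singleton h).elim
      · have hsM : s = M := by simpa using hmem2
        subst hsM
        rcases List.mem_append.mp ((((ss_perm A).append (ss_perm B)).mem_iff).mp hmem1)
          with h | h
        · exact hA d h
        · exact hB d h

theorem ss_restrict_iter {l : List ℕ} (hnd : l.Nodup) (p : ℕ → Bool) (hc : Cond p l) (k : ℕ) :
    ss^[k] (l.filter p) = (ss^[k] l).filter p ∧ Cond p (ss^[k] l) := by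
  induction k with
  | zero => exact ⟨rfl, hc⟩
  | succ k ihk =>
    obtain ⟨h1, h2⟩ := ihk
    obtain ⟨h3, h4⟩ := ss_restrict (ss^[k] l).length (ss^[k] l) le_rfl (ss_iter_nodup hnd k) p h2
    rw [Function.iterate_succ_apply', Function.iterate_succ_apply', h1]
    exact ⟨h3, h4⟩

end StmtAux
namespace StmtAux

lemma met_sorted {l : List ℕ} (hnd : l.Nodup) : List.Pairwise (· < ·) (ss^[met l] l) := by
  have hne : {k | List.Pairwise (· < ·) (ss^[k] l)}.Nonempty :=
    exists_sorted l.length l le_rfl hnd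
  exact Nat.sInf_mem hne

lemma met_le {l : List ℕ} {k : ℕ} (h : List.Pairwise (· < ·) (ss^[k] l)) : met l ≤ k :=
  Nat.sInf_le h

lemma lt_met {l : List ℕ} (hnd : l.Nodup) {k : ℕ}
    (h : ¬ List.Pairwise (· < ·) (ss^[k] l)) : k < met l := by
  by_contra h'
  push_neg at h'
  exact h (sorted_mono (met_sorted hnd) h')

/-- The value-membership predicate describing `π^i` as a value-filter of `π`. -/
def pfun (π : List ℕ) (i : ℕ) : ℕ → Bool :=
  fun x => decide (π.getD (i - 1) 0 ≤ x) && decide (x ∈ π.take i)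

lemma claimE (π : List ℕ) (hnd : π.Nodup) (i : ℕ) :
    π.filter (pfun π i) = (π.take i).filter (fun x => π.getD (i - 1) 0 ≤ x) := by
  have hdisj : List.Disjoint (π.take i) (π.drop i) := by
    have h2 : (π.take i ++ π.drop i).Nodup := by rw [List.take_append_drop]; exact hnd
    exact (List.nodup_append'.mp h2).2.2
  have h0 : π.filter (pfun π i) = (π.take i ++ π.drop i).filter (pfun π i) := by
    rw [List.take_append_drop]
  rw [h0, List.filter_append]
  have h1 : (π.take i).filter (pfun π i)
      = (π.take i).filter (fun x => π.getD (i - 1) 0 ≤ x) :=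
    List.filter_congr (fun x hx => by simp [pfun, hx])
  have h2 : (π.drop i).filter (pfun π i) = [] := by
    rw [List.filter_eq_nil_iff]
    intro x hx hpx
    simp only [pfun, Bool.and_eq_true, decide_eq_true_eq] at hpx
    exact hdisj hpx.2 hx
  rw [h1, h2, List.append_nil]

lemma claimF (π : List ℕ) (hnd : π.Nodup) (i : ℕ) : Cond (pfun π i) π := by
  have hdisj : List.Disjoint (π.take i) (π.drop i) := by
    have h2 : (π.take i ++ π.drop i).Nodup := by rw [List.take_append_drop]; exact hnd
    exact (List.nodup_append'.mp h2).2.2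
  intro d s hds hd hs
  simp only [pfun, Bool.and_eq_true, decide_eq_true_eq] at hs
  by_cases hdv : π.getD (i - 1) 0 ≤ d
  · exfalso
    have hd' : d ∉ π.take i := by
      intro hmem
      have hcontra : pfun π i d = true := by
        simp only [pfun, Bool.and_eq_true, decide_eq_true_eq]
        exact ⟨hdv, hmem⟩
      rw [hcontra] at hd
      simp at hd
    have hds' : ([d, s] : List ℕ).Sublist (π.take i ++ π.drop i) := by
      rw [List.take_append_drop]; exact hds
    rcases pair_sublist_append hds' with h | h | ⟨h1, h2⟩
    · exact hd' (h.subset (by simp))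
    · exact hdisj hs.2 (h.subset (by simp))
    · exact hd' h1
  · push_neg at hdv
    omega

end StmtAux

open StmtAux in
theorem stmt_0' (n : ℕ) (hn : 1 ≤ n) (π : List ℕ) (hπ : π.Perm (List.range' 1 n)) :
    met π = (Finset.Icc 1 n).sup
      (fun i => met ((π.take i).filter (fun x => π.getD (i - 1) 0 ≤ x))) := by
  have hlen : π.length = n := by simpa using hπ.length_eq
  have hnd : π.Nodup := hπ.nodup_iff.mpr List.nodup_range'
  apply le_antisymm
  · -- met π ≤ sup
    rcases Nat.eq_zero_or_pos (met π) with h0 | hpos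
    · simp [h0]
    set k := met π with hk
    have hns : ¬ List.Pairwise (· < ·) (ss^[k - 1] π) := by
      intro hs
      have := met_le hs
      omega
    obtain ⟨a, b, hba, hab⟩ := exists_inversion_of_not_sorted (ss_iter_nodup hnd (k - 1)) hns
    have habπ : ([a, b] : List ℕ).Sublist π := ss_iter_inversion hnd hba (k - 1) hab
    obtain ⟨X, Y, hXY, hbY⟩ := pair_sublist_split habπ
    obtain ⟨Y₁, Y₂, hY⟩ := List.append_of_mem hbY
    set P := X ++ a :: Y₁ with hP
    have hπP : π = P ++ b :: Y₂ := by rw [hXY, hY, hP]; simp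
    set i := P.length + 1 with hi
    have hii : i ∈ Finset.Icc 1 n := by
      rw [Finset.mem_Icc]
      have : π.length = P.length + 1 + Y₂.length := by rw [hπP]; simp; omega
      omega
    have hv : π.getD (i - 1) 0 = b := by
      rw [hπP]
      have : i - 1 = P.length := by omega
      rw [this, List.getD_append_right P (b :: Y₂) 0 P.length le_rfl]
      simp
    have htake : π.take i = P ++ [b] := by
      rw [hπP, hi, List.take_append]
      simp
    have hpa : pfun π i a = true := by
      simp only [pfun, hv, htake, Bool.and_eq_true, decide_eq_true_eq]
      exact ⟨hba.le, by simp [hP]⟩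
    have hpb : pfun π i b = true := by
      simp only [pfun, hv, htake, Bool.and_eq_true, decide_eq_true_eq]
      exact ⟨le_rfl, by simp⟩
    obtain ⟨hfe, _⟩ := ss_restrict_iter hnd (pfun π i) (claimF π hnd i) (k - 1)
    have hsubf : ([a, b] : List ℕ).Sublist (ss^[k - 1] (π.filter (pfun π i))) := by
      rw [hfe]
      have := hab.filter (pfun π i)
      simpa [hpa, hpb] using this
    have hnsf : ¬ List.Pairwise (· < ·) (ss^[k - 1] (π.filter (pfun π i))) := by
      intro hs
      have := sorted_pair_lt hs hsubf
      omega
    have hmetf : k ≤ met (π.filter (pfun π i)) := by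
      have := lt_met (hnd.filter _) hnsf
      omega
    calc k ≤ met (π.filter (pfun π i)) := hmetf
      _ = met ((π.take i).filter (fun x => π.getD (i - 1) 0 ≤ x)) := by rw [claimE π hnd i]
      _ ≤ _ := Finset.le_sup (f := fun i => met ((π.take i).filter
          (fun x => π.getD (i - 1) 0 ≤ x))) hii
  · apply Finset.sup_le
    intro i _
    rw [← claimE π hnd i]
    obtain ⟨hfe, _⟩ := ss_restrict_iter hnd (pfun π i) (claimF π hnd i) (met π)
    have hsorted : List.Pairwise (· < ·) (ss^[met π] (π.filter (pfun π i))) := by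
      rw [hfe]
      exact List.Pairwise.sublist List.filter_sublist (met_sorted hnd)
    exact met_le hsorted
/-- Theorem 1.4 / 2.1: for all `π ∈ Sₙ`, `met(π) = max_{i ∈ [n]} met(π[:i+1]_{≥ π_i})`. -/
theorem stmt_0 (n : ℕ) (hn : 1 ≤ n) (π : List ℕ) (hπ : π.Perm (List.range' 1 n)) :
    met π = (Finset.Icc 1 n).sup
      (fun i => met ((π.take i).filter (fun x => π.getD (i - 1) 0 ≤ x))) := by
  exact stmt_0' n hn π hπ
end

section
/- For every n ≥ 1 and every permutation π ∈ S_n, met(π) = max(met(π[:n]), met(π_{≥π_n})), where π[:n] is the sequence of the first n−1 entries of π and π_{≥π_n} is the subsequence of entries of π greater than or equal to its last entry π_n. -/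
section Aux
open List

lemma ss_nil : ss [] = [] := by rw [ss]

lemma fmax_le {l : List ℕ} {x : ℕ} (h : x ∈ l) : x ≤ l.foldr max 0 := by
  induction l with
  | nil => simp at h
  | cons y ys ih =>
    rcases List.mem_cons.mp h with rfl | h
    · simp [le_max_iff]
    · simp only [List.foldr_cons]; exact le_max_of_le_right (ih h)

lemma tw_middle (L : List ℕ) (m : ℕ) (R : List ℕ) (h : ∀ x ∈ L, x ≠ m) :
    (L ++ m :: R).takeWhile (fun y => y ≠ m) = L := by
  induction L with
  | nil => simp [List.takeWhile]
  | cons y ys ih =>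
    have hy : y ≠ m := h y (by simp)
    rw [List.cons_append, List.takeWhile_cons, if_pos (decide_eq_true hy),
      ih (fun x hx => h x (by simp [hx]))]

lemma dw_middle (L : List ℕ) (m : ℕ) (R : List ℕ) (h : ∀ x ∈ L, x ≠ m) :
    (L ++ m :: R).dropWhile (fun y => y ≠ m) = m :: R := by
  induction L with
  | nil => simp [List.dropWhile]
  | cons y ys ih =>
    have hy : y ≠ m := h y (by simp)
    rw [List.cons_append, List.dropWhile_cons, if_pos (decide_eq_true hy),
      ih (fun x hx => h x (by simp [hx]))]

lemma ss_split (L : List ℕ) (m : ℕ) (R : List ℕ)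
    (hL : ∀ x ∈ L, x < m) (hR : ∀ x ∈ R, x ≤ m) :
    ss (L ++ m :: R) = ss L ++ ss R ++ [m] := by
  have hmem : m ∈ L ++ m :: R := by simp
  have hfold : (L ++ m :: R).foldr max 0 = m := by
    refine le_antisymm ?_ (fmax_le hmem)
    have hne : L ++ m :: R ≠ [] := by simp
    obtain ⟨x, xs, hx⟩ := List.exists_cons_of_ne_nil hne
    have hmm : (L ++ m :: R).foldr max 0 ∈ L ++ m :: R := by rw [hx]; exact foldrMaxMem x xs
    rcases List.mem_append.mp hmm with h | h
    · exact le_of_lt (hL _ h)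
    · rcases List.mem_cons.mp h with h | h
      · exact le_of_eq h
      · exact hR _ h
  have hne' : ∀ x ∈ L, x ≠ m := fun x hx => ne_of_lt (hL x hx)
  obtain ⟨x, xs, hx⟩ := List.exists_cons_of_ne_nil (show L ++ m :: R ≠ [] by simp)
  rw [hx, ss, ← hx, hfold, tw_middle L m R hne', dw_middle L m R hne', List.drop_one,
    List.tail_cons]

end Aux

section Aux2
open List

/-- decomposition of a nonempty list at its max -/
lemma ss_decomp (l : List ℕ) (hl : l ≠ []) :
    l = l.takeWhile (fun y => y ≠ l.foldr max 0) ++ l.foldr max 0 ::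
      ((l.dropWhile (fun y => y ≠ l.foldr max 0)).drop 1) := by
  obtain ⟨x, xs, rfl⟩ := List.exists_cons_of_ne_nil hl
  set l := x :: xs with hl'
  set m := l.foldr max 0 with hm
  have hmem : m ∈ l := foldrMaxMem x xs
  have hdw : l.dropWhile (fun y => y ≠ m) ≠ [] := by
    intro h
    have := List.dropWhile_eq_nil_iff.mp h m hmem
    simp at this
  have hhead : ((l.dropWhile (fun y => y ≠ m)).head hdw) = m := by
    have := List.head_dropWhile_not (fun y => decide (y ≠ m)) hdw
    simpa using this
  have hdweq : l.dropWhile (fun y => y ≠ m) = m :: ((l.dropWhile (fun y => y ≠ m)).drop 1) := by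
    rw [List.drop_one]
    nth_rewrite 1 [← List.cons_head_tail hdw]
    rw [hhead]
  conv_lhs => rw [← List.takeWhile_append_dropWhile (p := fun y => decide (y ≠ m)) (l := l), hdweq]

lemma ss_cons_eq (l : List ℕ) (hl : l ≠ []) :
    ss l = ss (l.takeWhile (fun y => y ≠ l.foldr max 0)) ++
      ss ((l.dropWhile (fun y => y ≠ l.foldr max 0)).drop 1) ++ [l.foldr max 0] := by
  obtain ⟨x, xs, rfl⟩ := List.exists_cons_of_ne_nil hl
  rw [ss]

lemma mem_T_ne {l : List ℕ} {y : ℕ} (h : y ∈ l.takeWhile (fun y => y ≠ l.foldr max 0)) :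
    y ≠ l.foldr max 0 := by
  have := List.mem_takeWhile_imp h; simpa using this

lemma ss_perm : ∀ l : List ℕ, (ss l).Perm l := by
  intro l
  induction l using ss.induct with
  | case1 => rw [ss_nil]
  | case2 x xs ih1 ih2 =>
    set l := x :: xs with hl
    set m := l.foldr max 0 with hm
    rw [ss_cons_eq l (by simp [hl])]
    refine ((ih1.append ih2).append (List.Perm.refl [m])).trans ?_
    conv_rhs => rw [ss_decomp l (by simp [hl])]
    rw [List.append_assoc, ← hm]
    exact List.Perm.append_left _ (List.perm_append_singleton _ _)

section Aux3
open List

lemma mem_l_of_mem_T {l : List ℕ} {y : ℕ} {m : ℕ}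
    (h : y ∈ l.takeWhile (fun y => y ≠ m)) : y ∈ l :=
  (List.takeWhile_sublist _).subset h

lemma mem_l_of_mem_D {l : List ℕ} {y : ℕ} {m : ℕ}
    (h : y ∈ (l.dropWhile (fun y => y ≠ m)).drop 1) : y ∈ l :=
  (List.dropWhile_sublist _).subset ((List.drop_sublist _ _).subset h)

lemma filter_ne_eq_self {l : List ℕ} {a : ℕ} (h : ∀ y ∈ l, y ≠ a) :
    l.filter (fun x => x ≠ a) = l :=
  List.filter_eq_self.mpr (fun y hy => by simpa using h y hy)

lemma nodup_split {P S : List ℕ} {a : ℕ} (h : (P ++ a :: S).Nodup) : a ∉ P ∧ a ∉ S := by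
  rw [List.nodup_append] at h
  exact ⟨fun hp => h.2.2 a hp a (by simp) rfl, fun hs => (List.nodup_cons.mp h.2.1).1 hs⟩

lemma split_unique {a : ℕ} : ∀ (P P' S S' : List ℕ), a ∉ P → a ∉ P' →
    P ++ a :: S = P' ++ a :: S' → P = P' ∧ S = S' := by
  intro P
  induction P with
  | nil =>
    intro P' S S' _ hP' h
    cases P' with
    | nil => simp_all
    | cons d P' =>
      simp only [List.nil_append, List.cons_append, List.cons.injEq] at h
      exact absurd (h.1 ▸ (List.mem_cons_self (a := d) (l := P'))) hP'
  | cons c P ih =>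
    intro P' S S' hP hP' h
    cases P' with
    | nil =>
      simp only [List.nil_append, List.cons_append, List.cons.injEq] at h
      exact absurd (h.1 ▸ (List.mem_cons_self (a := c) (l := P))) (h.1 ▸ hP)
    | cons d P' =>
      simp only [List.cons_append, List.cons.injEq] at h
      obtain ⟨rfl, h2⟩ := h
      have := ih P' S S' (fun hx => hP (List.mem_cons_of_mem _ hx))
        (fun hx => hP' (List.mem_cons_of_mem _ hx)) h2
      exact ⟨by rw [this.1], this.2⟩

lemma ss_filter_le (a : ℕ) : ∀ l : List ℕ,
    (ss l).filter (fun x => a ≤ x) = ss (l.filter (fun x => a ≤ x)) := by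
  intro l
  induction l using ss.induct with
  | case1 => rw [ss_nil]; simp [ss_nil]
  | case2 x xs ih1 ih2 =>
    set l := x :: xs with hldef
    set m := l.foldr max 0 with hm
    have hlne : l ≠ [] := by simp [hldef]
    by_cases ham : a ≤ m
    · have hdec : l = l.takeWhile (fun y => y ≠ m) ++ m ::
          ((l.dropWhile (fun y => y ≠ m)).drop 1) := ss_decomp l hlne
      have hTf : ∀ y ∈ (l.takeWhile (fun y => y ≠ m)).filter (fun x => a ≤ x), y < m := by
        intro y hy
        have hyT := (List.mem_filter.mp hy).1
        exact lt_of_le_of_ne (fmax_le (mem_l_of_mem_T hyT)) (mem_T_ne hyT)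
      have hDf : ∀ y ∈ ((l.dropWhile (fun y => y ≠ m)).drop 1).filter (fun x => a ≤ x), y ≤ m := by
        intro y hy
        exact fmax_le (mem_l_of_mem_D (List.mem_filter.mp hy).1)
      have hrhs : l.filter (fun x => a ≤ x) =
          (l.takeWhile (fun y => y ≠ m)).filter (fun x => a ≤ x) ++ m ::
            ((l.dropWhile (fun y => y ≠ m)).drop 1).filter (fun x => a ≤ x) := by
        conv_lhs => rw [hdec]
        rw [List.filter_append, List.filter_cons]
        simp [ham]
      rw [ss_cons_eq l hlne, ← hm, List.filter_append, List.filter_append, ih1, ih2, hrhs,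
        ss_split _ m _ hTf hDf]
      simp [ham]
    · push_neg at ham
      have hall : ∀ y ∈ l, ¬ (a ≤ y) := fun y hy => by
        have := fmax_le hy; omega
      have h1 : l.filter (fun x => a ≤ x) = [] :=
        List.filter_eq_nil_iff.mpr (fun y hy => by simpa using hall y hy)
      have h2 : (ss l).filter (fun x => a ≤ x) = [] :=
        List.filter_eq_nil_iff.mpr (fun y hy => by
          simpa using hall y ((ss_perm l).mem_iff.mp hy))
      rw [h1, h2, ss_nil]

end Aux3

section Aux4
open List

lemma ss_del (a : ℕ) : ∀ l : List ℕ, l.Nodup → ∀ P S, l = P ++ a :: S → (∀ x ∈ S, a < x) →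
    (ss l).filter (fun x => x ≠ a) = ss (l.filter (fun x => x ≠ a)) ∧
    ∃ P' S', ss l = P' ++ a :: S' ∧ ∀ x ∈ S', a < x := by
  intro l
  induction l using ss.induct with
  | case1 =>
    intro _ P S h _
    exact absurd h (by simp)
  | case2 x xs ih1 ih2 =>
    intro hnd P S hPS hS
    set l := x :: xs with hldef
    set m := l.foldr max 0 with hm
    have hlne : l ≠ [] := by simp [hldef]
    have hdec : l = l.takeWhile (fun y => y ≠ m) ++ m ::
        ((l.dropWhile (fun y => y ≠ m)).drop 1) := ss_decomp l hlne
    set T := l.takeWhile (fun y => y ≠ m) with hT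
    set D := (l.dropWhile (fun y => y ≠ m)).drop 1 with hD
    have haP : a ∉ P := (nodup_split (hPS ▸ hnd)).1
    have ha_mem : a ∈ l := by rw [hPS]; simp
    have hTlt : ∀ y ∈ T, y < m := fun y hy =>
      lt_of_le_of_ne (fmax_le (mem_l_of_mem_T hy)) (mem_T_ne hy)
    have hDle : ∀ y ∈ D, y ≤ m := fun y hy => fmax_le (mem_l_of_mem_D hy)
    have hmT : m ∉ T := fun h => (mem_T_ne h) rfl
    have hndTD : (T ++ m :: D).Nodup := hdec ▸ hnd
    have hTnd : T.Nodup := hnd.sublist (List.takeWhile_sublist _)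
    have hDnd : D.Nodup := hnd.sublist ((List.drop_sublist _ _).trans (List.dropWhile_sublist _))
    by_cases ham : a = m
    · -- a is the maximum; S and D are empty
      have hSnil : S = [] := by
        rw [List.eq_nil_iff_forall_not_mem]
        intro y hy
        have h1 := hS y hy
        have h2 : y ∈ l := by rw [hPS]; simp [hy]
        have h3 := fmax_le h2
        rw [← hm] at h3
        omega
      have haT' : a ∉ T := fun h => (mem_T_ne h) ham
      have hdec' : l = T ++ a :: D := by rw [ham]; exact hdec
      obtain ⟨hPT, hSD⟩ := split_unique P T S D haP haT' (hPS.symm.trans hdec')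
      have hDnil : D = [] := hSnil ▸ hSD.symm
      have hssT_ne : ∀ y ∈ ss T, y ≠ a := fun y hy he =>
        (mem_T_ne ((ss_perm T).mem_iff.mp hy)) (he.trans ham)
      have hT_ne : ∀ y ∈ T, y ≠ a := fun y hy he => (mem_T_ne hy) (he.trans ham)
      have e1 : ([m] : List ℕ).filter (fun x => x ≠ a) = [] := by simp [ham]
      constructor
      · rw [ss_cons_eq l hlne, ← hm, ← hT, ← hD, hDnil, ss_nil]
        conv_rhs => rw [hdec', hDnil]
        simp only [List.filter_append]
        rw [filter_ne_eq_self hssT_ne, filter_ne_eq_self hT_ne, e1]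
        have e2 : ((a :: []) : List ℕ).filter (fun x => x ≠ a) = [] := by simp
        rw [e2]
        simp
      · refine ⟨ss T, [], ?_, by simp⟩
        rw [ss_cons_eq l hlne, ← hm, ← hT, ← hD, hDnil, ss_nil, ← ham]
        simp
    · -- a ≠ m
      have haTD : a ∈ T ++ m :: D := hdec ▸ ha_mem
      rcases List.mem_append.mp haTD with haT | haMD
      · -- a ∈ T
        obtain ⟨P₁, S₁, hT1⟩ := List.append_of_mem haT
        have hl2 : l = P₁ ++ a :: (S₁ ++ m :: D) := by
          rw [hdec, hT1]; simp [List.append_assoc]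
        have haP₁ : a ∉ P₁ := (nodup_split (hl2 ▸ hnd)).1
        obtain ⟨hPP, hSS⟩ := split_unique P P₁ S (S₁ ++ m :: D) haP haP₁ (hPS.symm.trans hl2)
        have hS₁ : ∀ y ∈ S₁, a < y := fun y hy => hS y (hSS ▸ (by simp [hy]))
        have ham' : a < m := hS m (hSS ▸ (by simp))
        have hDgt : ∀ y ∈ D, a < y := fun y hy => hS y (hSS ▸ (by simp [hy]))
        obtain ⟨ihf, P', S', hssT, hS'⟩ := ih1 hTnd P₁ S₁ hT1 hS₁
        have hssD_ne : ∀ y ∈ ss D, y ≠ a :=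
          fun y hy => ne_of_gt (hDgt y ((ss_perm D).mem_iff.mp hy))
        have hD_ne : ∀ y ∈ D, y ≠ a := fun y hy => ne_of_gt (hDgt y hy)
        have hTflt : ∀ y ∈ T.filter (fun x => x ≠ a), y < m :=
          fun y hy => hTlt y (List.mem_filter.mp hy).1
        constructor
        · rw [ss_cons_eq l hlne, ← hm, ← hT, ← hD]
          rw [List.filter_append, List.filter_append, filter_ne_eq_self hssD_ne, ihf]
          have hma : ([m] : List ℕ).filter (fun x => x ≠ a) = [m] := by
            simp [Ne.symm ham]
          rw [hma]
          have hma2 : (m :: D).filter (fun x => x ≠ a) = m :: D.filter (fun x => x ≠ a) := by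
            rw [List.filter_cons]
            simp [Ne.symm ham]
          conv_rhs => rw [hdec]
          rw [List.filter_append, hma2, filter_ne_eq_self hD_ne, ss_split _ m _ hTflt hDle]
        · refine ⟨P', S' ++ (ss D ++ [m]), ?_, ?_⟩
          · rw [ss_cons_eq l hlne, ← hm, ← hT, ← hD, hssT]
            simp [List.append_assoc]
          · intro y hy
            rcases List.mem_append.mp hy with h | h
            · exact hS' y h
            · rcases List.mem_append.mp h with h | h
              · exact hDgt y ((ss_perm D).mem_iff.mp h)
              · simp at h; omega
      · -- a = m ∨ a ∈ D
        rcases List.mem_cons.mp haMD with h | haD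
        · exact absurd h ham
        obtain ⟨P₂, S₂, hD1⟩ := List.append_of_mem haD
        have hl2 : l = (T ++ m :: P₂) ++ a :: S₂ := by
          rw [hdec, hD1]; simp [List.append_assoc]
        have haTP₂ : a ∉ T ++ m :: P₂ := (nodup_split (hl2 ▸ hnd)).1
        obtain ⟨hPP, hSS⟩ := split_unique P (T ++ m :: P₂) S S₂ haP haTP₂ (hPS.symm.trans hl2)
        have hS₂ : ∀ y ∈ S₂, a < y := fun y hy => hS y (hSS ▸ hy)
        have haT' : a ∉ T := fun h => haTP₂ (by simp [h])
        have ham' : a < m := lt_of_le_of_ne (fmax_le ha_mem) ham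
        obtain ⟨ihf, P'', S'', hssD, hS''⟩ := ih2 hDnd P₂ S₂ hD1 hS₂
        have hssT_ne : ∀ y ∈ ss T, y ≠ a :=
          fun y hy => fun he => haT' (he ▸ (ss_perm T).mem_iff.mp hy)
        have hT_ne : ∀ y ∈ T, y ≠ a := fun y hy he => haT' (he ▸ hy)
        have hDfle : ∀ y ∈ D.filter (fun x => x ≠ a), y ≤ m :=
          fun y hy => hDle y (List.mem_filter.mp hy).1
        constructor
        · rw [ss_cons_eq l hlne, ← hm, ← hT, ← hD]
          rw [List.filter_append, List.filter_append, filter_ne_eq_self hssT_ne, ihf]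
          have hma : ([m] : List ℕ).filter (fun x => x ≠ a) = [m] := by
            simp [Ne.symm ham]
          rw [hma]
          have hma2 : (m :: D).filter (fun x => x ≠ a) = m :: D.filter (fun x => x ≠ a) := by
            rw [List.filter_cons]
            simp [Ne.symm ham]
          conv_rhs => rw [hdec]
          rw [List.filter_append, hma2, filter_ne_eq_self hT_ne, ss_split _ m _ hTlt hDfle]
        · refine ⟨ss T ++ P'', S'' ++ [m], ?_, ?_⟩
          · rw [ss_cons_eq l hlne, ← hm, ← hT, ← hD, hssD]
            simp [List.append_assoc]
          · intro y hy
            rcases List.mem_append.mp hy with h | h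
            · exact hS'' y h
            · simp at h; omega

end Aux4

section Aux5
open List

lemma ss_of_sorted_aux : ∀ n : ℕ, ∀ l : List ℕ, l.length ≤ n → List.Pairwise (· < ·) l →
    ss l = l := by
  intro n
  induction n with
  | zero =>
    intro l hl _
    have : l = [] := List.eq_nil_of_length_eq_zero (Nat.le_zero.mp hl)
    rw [this, ss_nil]
  | succ n ih =>
    intro l hl hs
    rcases eq_or_ne l [] with rfl | hne
    · exact ss_nil
    · have hdl : l = l.dropLast ++ [l.getLast hne] := (List.dropLast_append_getLast hne).symm
      have hs2 : List.Pairwise (· < ·) (l.dropLast ++ [l.getLast hne]) := hdl ▸ hs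
      rw [List.pairwise_append] at hs2
      have hlt : ∀ x ∈ l.dropLast, x < l.getLast hne :=
        fun x hx => hs2.2.2 x hx _ (by simp)
      have hsplit := ss_split l.dropLast (l.getLast hne) [] hlt (by simp)
      have hlen : l.dropLast.length ≤ n := by
        have := List.length_dropLast (xs := l)
        have hpos : 0 < l.length := List.length_pos_iff.mpr hne
        omega
      conv_lhs => rw [hdl]
      rw [hsplit, ih l.dropLast hlen hs2.1, ss_nil]
      simp [← hdl]

lemma ss_of_sorted {l : List ℕ} (h : List.Pairwise (· < ·) l) : ss l = l :=
  ss_of_sorted_aux l.length l le_rfl h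

lemma sorted_iter_mono {l : List ℕ} {k j : ℕ} (hkj : k ≤ j)
    (h : List.Pairwise (· < ·) (ss^[k] l)) : List.Pairwise (· < ·) (ss^[j] l) := by
  induction j with
  | zero => rw [Nat.le_zero.mp hkj] at h; exact h
  | succ j ih =>
    rcases Nat.lt_or_ge k (j+1) with hlt | hge
    · have hj := ih (by omega)
      rw [Function.iterate_succ_apply', ss_of_sorted hj]
      exact hj
    · have : k = j + 1 := le_antisymm hkj hge
      rw [← this]; exact h

lemma ss_iter_perm : ∀ (k : ℕ) (l : List ℕ), (ss^[k] l).Perm l := by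
  intro k
  induction k with
  | zero => intro l; simp
  | succ k ih =>
    intro l
    rw [Function.iterate_succ_apply']
    exact (ss_perm _).trans (ih l)

lemma ss_append_max {Y : List ℕ} {m : ℕ} (h : ∀ x ∈ Y, x < m) :
    ss (Y ++ [m]) = ss Y ++ [m] := by
  have := ss_split Y m [] h (by simp)
  simpa [ss_nil] using this

lemma ss_iter_append_max (m : ℕ) : ∀ (j : ℕ) (Y : List ℕ), (∀ x ∈ Y, x < m) →
    ss^[j] (Y ++ [m]) = ss^[j] Y ++ [m] := by
  intro j
  induction j with
  | zero => intro Y _; simp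
  | succ j ih =>
    intro Y h
    rw [Function.iterate_succ_apply, Function.iterate_succ_apply, ss_append_max h,
      ih (ss Y) (fun x hx => h x ((ss_perm Y).mem_iff.mp hx))]

lemma exists_sorted_aux : ∀ n : ℕ, ∀ l : List ℕ, l.length ≤ n → l.Nodup →
    ∃ k, List.Pairwise (· < ·) (ss^[k] l) := by
  intro n
  induction n with
  | zero =>
    intro l hl _
    refine ⟨0, ?_⟩
    have : l = [] := List.eq_nil_of_length_eq_zero (Nat.le_zero.mp hl)
    simp [this]
  | succ n ih =>
    intro l hl hnd
    rcases eq_or_ne l [] with rfl | hne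
    · exact ⟨0, by simp⟩
    set m := l.foldr max 0 with hm
    set T := l.takeWhile (fun y => y ≠ m) with hT
    set D := (l.dropWhile (fun y => y ≠ m)).drop 1 with hD
    have hdec : l = T ++ m :: D := ss_decomp l hne
    have hssl : ss l = (ss T ++ ss D) ++ [m] := by
      rw [ss_cons_eq l hne, ← hm, ← hT, ← hD]
    have hndTD : (T ++ m :: D).Nodup := hdec ▸ hnd
    obtain ⟨hmT, hmD⟩ := nodup_split hndTD
    have hYperm : (ss T ++ ss D).Perm (T ++ D) := (ss_perm T).append (ss_perm D)
    have hTDnd : (T ++ D).Nodup :=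
      hndTD.sublist ((List.sublist_cons_self m D).append_left T)
    have hYnd : (ss T ++ ss D).Nodup := hYperm.nodup_iff.mpr hTDnd
    have hlen : (ss T ++ ss D).length ≤ n := by
      have h1 : l.length = T.length + (D.length + 1) := by
        rw [hdec]; simp
      have h2 : (ss T ++ ss D).length = T.length + D.length := by
        rw [List.length_append, (ss_perm T).length_eq, (ss_perm D).length_eq]
      omega
    have hYlt : ∀ x ∈ ss T ++ ss D, x < m := by
      intro x hx
      rcases List.mem_append.mp (hYperm.mem_iff.mp hx) with h | h
      · exact lt_of_le_of_ne (fmax_le (mem_l_of_mem_T h)) (mem_T_ne h)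
      · exact lt_of_le_of_ne (fmax_le (mem_l_of_mem_D h)) (fun he => hmD (he ▸ h))
    obtain ⟨j, hj⟩ := ih (ss T ++ ss D) hlen hYnd
    refine ⟨j + 1, ?_⟩
    rw [Function.iterate_succ_apply, hssl, ss_iter_append_max m j _ hYlt]
    refine List.pairwise_append.mpr ⟨hj, by simp, ?_⟩
    intro x hx b hb
    rw [List.mem_singleton] at hb
    rw [hb]
    exact hYlt x ((ss_iter_perm j _).mem_iff.mp hx)

lemma exists_sorted {l : List ℕ} (hnd : l.Nodup) : ∃ k, List.Pairwise (· < ·) (ss^[k] l) :=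
  exists_sorted_aux l.length l le_rfl hnd

lemma sorted_combine {P S : List ℕ} {a : ℕ} (hnd : (P ++ a :: S).Nodup)
    (hS : ∀ x ∈ S, a < x)
    (h1 : List.Pairwise (· < ·) ((P ++ a :: S).filter (fun x => x ≠ a)))
    (h2 : List.Pairwise (· < ·) ((P ++ a :: S).filter (fun x => a ≤ x))) :
    List.Pairwise (· < ·) (P ++ a :: S) := by
  obtain ⟨haP, haS⟩ := nodup_split hnd
  have hfP : P.filter (fun x => x ≠ a) = P := filter_ne_eq_self (fun y hy he => haP (he ▸ hy))
  have hfS : S.filter (fun x => x ≠ a) = S := filter_ne_eq_self (fun y hy => ne_of_gt (hS y hy))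
  have e1 : (a :: S).filter (fun x => x ≠ a) = S := by
    rw [List.filter_cons, if_neg (by simp)]
    exact hfS
  have hfSle : S.filter (fun x => a ≤ x) = S :=
    List.filter_eq_self.mpr (fun y hy => by simpa using le_of_lt (hS y hy))
  have e2 : (a :: S).filter (fun x => a ≤ x) = a :: S := by
    rw [List.filter_cons, if_pos (by simp), hfSle]
  rw [List.filter_append, hfP, e1] at h1
  rw [List.filter_append, e2] at h2
  have h1' : List.Pairwise (· < ·) (P ++ S) := h1
  have h2' : List.Pairwise (· < ·) (P.filter (fun x => a ≤ x) ++ a :: S) := h2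
  have hPlt : ∀ x ∈ P, x < a := by
    intro x hx
    by_contra hge
    push_neg at hge
    have hxf : x ∈ P.filter (fun x => a ≤ x) := List.mem_filter.mpr ⟨hx, by simpa using hge⟩
    rw [List.pairwise_append] at h2'
    have hxa := h2'.2.2 x hxf a (by simp)
    omega
  rw [List.pairwise_append] at h1'
  refine List.pairwise_append.mpr ⟨h1'.1, List.pairwise_cons.mpr ⟨hS, h1'.2.1⟩, ?_⟩
  intro p hp b hb
  rcases List.mem_cons.mp hb with rfl | hbS
  · exact hPlt p hp
  · exact h1'.2.2 p hp b hbS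

end Aux5

section Main
open List

lemma key_iter (a : ℕ) (σ : List ℕ) (hnd : (σ ++ [a]).Nodup) :
    ∀ k : ℕ, (ss^[k] (σ ++ [a])).filter (fun x => x ≠ a) = ss^[k] σ ∧
      (ss^[k] (σ ++ [a])).filter (fun x => a ≤ x) =
        ss^[k] ((σ ++ [a]).filter (fun x => a ≤ x)) ∧
      ∃ P S, ss^[k] (σ ++ [a]) = P ++ a :: S ∧ ∀ x ∈ S, a < x := by
  intro k
  induction k with
  | zero =>
    refine ⟨?_, rfl, σ, [], rfl, by simp⟩
    have haσ : a ∉ σ := (nodup_split hnd).1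
    show (σ ++ [a]).filter (fun x => x ≠ a) = σ
    rw [List.filter_append, filter_ne_eq_self (fun y hy he => haσ (by rw [← he]; exact hy))]
    simp
  | succ k ih =>
    obtain ⟨ih1, ih2, P, S, hPS, hS⟩ := ih
    have hnd' : (ss^[k] (σ ++ [a])).Nodup := (ss_iter_perm k _).nodup_iff.mpr hnd
    obtain ⟨hdel, hinv⟩ := ss_del a _ hnd' P S hPS hS
    rw [Function.iterate_succ_apply', Function.iterate_succ_apply',
      Function.iterate_succ_apply']
    exact ⟨by rw [hdel, ih1], by rw [ss_filter_le a _, ih2], hinv⟩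

theorem stmt_1' (n : ℕ) (hn : 1 ≤ n) (π : List ℕ) (hπ : π.Perm (List.range' 1 n)) :
    met π = max (met π.dropLast) (met (π.filter (fun x => (π.getLast?).getD 0 ≤ x))) := by
  have hlen : π.length = n := by rw [hπ.length_eq]; simp
  have hne : π ≠ [] := by
    intro h; rw [h] at hlen; simp at hlen; omega
  set a := π.getLast hne with ha
  have hga : (π.getLast?).getD 0 = a := by rw [List.getLast?_eq_getLast (l := π) hne]; rfl
  have hnd : π.Nodup := hπ.nodup_iff.mpr (List.nodup_range' (s := 1) (n := n))
  have hsplit : π = π.dropLast ++ [a] := (List.dropLast_append_getLast hne).symm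
  have hnd' : (π.dropLast ++ [a]).Nodup := hsplit ▸ hnd
  have hFeq : π.filter (fun x => (π.getLast?).getD 0 ≤ x) = π.filter (fun x => a ≤ x) := by
    rw [hga]
  have hk := key_iter a π.dropLast hnd'
  have hπk : ∀ j : ℕ, ss^[j] (π.dropLast ++ [a]) = ss^[j] π := fun j => by rw [← hsplit]
  have hFk : (π.dropLast ++ [a]).filter (fun x => a ≤ x) = π.filter (fun x => a ≤ x) := by
    rw [← hsplit]
  have hiff : ∀ k : ℕ, List.Pairwise (· < ·) (ss^[k] π) ↔
      (List.Pairwise (· < ·) (ss^[k] π.dropLast) ∧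
       List.Pairwise (· < ·) (ss^[k] (π.filter (fun x => a ≤ x)))) := by
    intro k
    obtain ⟨h1, h2, P, S, hPS, hS⟩ := hk k
    rw [hπk k] at h1 h2 hPS
    rw [hFk] at h2
    constructor
    · intro h
      constructor
      · rw [← h1]
        exact List.Pairwise.sublist List.filter_sublist h
      · rw [← h2]
        exact List.Pairwise.sublist List.filter_sublist h
    · rintro ⟨hσ, hF⟩
      rw [hPS]
      have hndk : (P ++ a :: S).Nodup := hPS ▸ ((ss_iter_perm k π).nodup_iff.mpr hnd)
      refine sorted_combine hndk hS ?_ ?_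
      · rw [← hPS, h1]; exact hσ
      · rw [← hPS, h2]; exact hF
  -- now compute the sInfs
  rw [hFeq]
  show sInf {k | List.Pairwise (· < ·) (ss^[k] π)} =
    max (sInf {k | List.Pairwise (· < ·) (ss^[k] π.dropLast)})
        (sInf {k | List.Pairwise (· < ·) (ss^[k] (π.filter (fun x => a ≤ x)))})
  set Sp := {k | List.Pairwise (· < ·) (ss^[k] π)} with hSp
  set Ss := {k | List.Pairwise (· < ·) (ss^[k] π.dropLast)} with hSs
  set Sf := {k | List.Pairwise (· < ·) (ss^[k] (π.filter (fun x => a ≤ x)))} with hSf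
  have hpne : Sp.Nonempty := exists_sorted hnd
  have hp_mem : sInf Sp ∈ Sp := Nat.sInf_mem hpne
  have hs_mem' : sInf Sp ∈ Ss := ((hiff _).mp hp_mem).1
  have hf_mem' : sInf Sp ∈ Sf := ((hiff _).mp hp_mem).2
  have hsne : Ss.Nonempty := ⟨_, hs_mem'⟩
  have hfne : Sf.Nonempty := ⟨_, hf_mem'⟩
  apply _root_.le_antisymm
  · apply Nat.sInf_le
    show List.Pairwise (· < ·) (ss^[max (sInf Ss) (sInf Sf)] π)
    rw [hiff]
    constructor
    · exact sorted_iter_mono (le_max_left _ _) (Nat.sInf_mem hsne)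
    · exact sorted_iter_mono (le_max_right _ _) (Nat.sInf_mem hfne)
  · exact max_le (Nat.sInf_le hs_mem') (Nat.sInf_le hf_mem')

end Main

/-- Lemma 5.5: for all `π ∈ Sₙ`, `met(π) = max(met(π[:n]), met(π_{≥ π_n}))`. -/
theorem stmt_1 (n : ℕ) (hn : 1 ≤ n) (π : List ℕ) (hπ : π.Perm (List.range' 1 n)) :
    met π = max (met π.dropLast) (met (π.filter (fun x => (π.getLast?).getD 0 ≤ x))) :=
  stmt_1' n hn π hπ
end Aux2
end

section
/- Let π be a permutation of length n ≥ 1 with last entry π_n, and let k ≥ 0. Then the subsequence of s^k(π) consisting of the entries strictly to the right of the entry π_n is increasing, and every entry of that subsequence is greater than π_n. -/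
namespace SSAux

lemma le_foldr_max (l : List ℕ) : ∀ y ∈ l, y ≤ l.foldr max 0 := by
  induction l with
  | nil => simp
  | cons x xs ih =>
    intro y hy
    rw [List.mem_cons] at hy
    rcases hy with rfl | hy
    · exact le_max_left _ _
    · exact le_trans (ih y hy) (le_max_right _ _)

lemma dropWhile_ne_eq (m : ℕ) (l : List ℕ) (hm : m ∈ l) :
    l.dropWhile (fun y => y ≠ m) = m :: (l.dropWhile (fun y => y ≠ m)).drop 1 := by
  induction l with
  | nil => simp at hm
  | cons x xs ih =>
    by_cases h : x = m
    · subst h; simp [List.dropWhile_cons]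
    · rw [List.mem_cons] at hm
      rcases hm with rfl | hm
      · exact absurd rfl h
      · simpa [List.dropWhile_cons, h] using ih hm

lemma ss_eq (x : ℕ) (xs : List ℕ) :
    ss (x :: xs) = ss ((x :: xs).takeWhile (fun y => y ≠ (x :: xs).foldr max 0)) ++
      ss (((x :: xs).dropWhile (fun y => y ≠ (x :: xs).foldr max 0)).drop 1) ++
      [(x :: xs).foldr max 0] := by
  rw [ss]

lemma ss_perm_aux : ∀ (n : ℕ) (l : List ℕ), l.length ≤ n → (ss l).Perm l := by
  intro n
  induction n with
  | zero => intro l hl; rw [List.length_eq_zero_iff.mp (Nat.le_zero.mp hl)]; simp [ss]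
  | succ n ih =>
  intro l hl
  match l with
  | [] => simp [ss]
  | x :: xs =>
    have hM : (x :: xs).foldr max 0 ∈ x :: xs := foldrMaxMem x xs
    rw [ss_eq]
    have h1 := ih ((x :: xs).takeWhile (fun y => y ≠ (x :: xs).foldr max 0))
      (by have := takeWhileLt (x :: xs) ((x :: xs).foldr max 0) hM; simp only [List.length_cons] at *; omega)
    have h2 := ih (((x :: xs).dropWhile (fun y => y ≠ (x :: xs).foldr max 0)).drop 1)
      (by have := dropWhileDropLt (x :: xs) ((x :: xs).foldr max 0) (by simp); simp only [List.length_cons] at *; omega)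
    have step1 : (ss ((x :: xs).takeWhile (fun y => y ≠ (x :: xs).foldr max 0)) ++
        ss (((x :: xs).dropWhile (fun y => y ≠ (x :: xs).foldr max 0)).drop 1) ++
        [(x :: xs).foldr max 0]).Perm
        ((x :: xs).takeWhile (fun y => y ≠ (x :: xs).foldr max 0) ++
        ((((x :: xs).dropWhile (fun y => y ≠ (x :: xs).foldr max 0)).drop 1) ++
        [(x :: xs).foldr max 0])) := by
      rw [← List.append_assoc]
      exact (h1.append h2).append (List.Perm.refl _)
    refine step1.trans ?_
    have step2 := List.Perm.append_left
      ((x :: xs).takeWhile (fun y => y ≠ (x :: xs).foldr max 0))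
      (List.perm_append_singleton ((x :: xs).foldr max 0)
        ((((x :: xs).dropWhile (fun y => y ≠ (x :: xs).foldr max 0)).drop 1)))
    refine step2.trans ?_
    rw [← dropWhile_ne_eq _ _ hM, List.takeWhile_append_dropWhile]

lemma ss_perm (l : List ℕ) : (ss l).Perm l := ss_perm_aux l.length l le_rfl

lemma drop_idxOf (m : ℕ) (A B : List ℕ) (hA : m ∉ A) :
    (A ++ m :: B).drop ((A ++ m :: B).idxOf m + 1) = B := by
  induction A with
  | nil => simp
  | cons a as ih =>
    have ha : a ≠ m := fun h => hA (h ▸ List.mem_cons_self)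
    have hA' : m ∉ as := fun h => hA (List.mem_cons_of_mem _ h)
    rw [List.cons_append, List.idxOf_cons_ne _ ha, List.drop_succ_cons]
    exact ih hA'

lemma mem_decomp (m : ℕ) (l : List ℕ) (hm : m ∈ l) :
    ∃ A B, l = A ++ m :: B ∧ m ∉ A := by
  induction l with
  | nil => simp at hm
  | cons x xs ih =>
    by_cases h : x = m
    · exact ⟨[], xs, by rw [h]; rfl, by simp⟩
    · rw [List.mem_cons] at hm
      rcases hm with rfl | hm
      · exact absurd rfl h
      · rcases ih hm with ⟨A, B, hAB, hA⟩
        exact ⟨x :: A, B, by rw [List.cons_append, hAB], by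
          simp only [List.mem_cons, not_or]; exact ⟨fun hh => h hh.symm, hA⟩⟩

def Good (m : ℕ) (l : List ℕ) : Prop :=
  List.Pairwise (· < ·) (l.drop (l.idxOf m + 1)) ∧
  ∀ x ∈ l.drop (l.idxOf m + 1), m < x

lemma good_iff (m : ℕ) (l X B : List ℕ) (hl : l = X ++ m :: B) (hX : m ∉ X) :
    Good m l ↔ (List.Pairwise (· < ·) B ∧ ∀ x ∈ B, m < x) := by
  subst hl; unfold Good; rw [drop_idxOf m X B hX]

end SSAux
namespace SSAux

lemma key_aux : ∀ (n : ℕ) (l : List ℕ), l.length ≤ n → l.Nodup →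
    ∀ m, m ∈ l → Good m l → Good m (ss l) := by
  intro n
  induction n with
  | zero =>
    intro l hl _ m hm _
    rw [List.length_eq_zero_iff.mp (Nat.le_zero.mp hl)] at hm; simp at hm
  | succ n ih =>
  intro l hl hnd m hm hG
  match l with
  | [] => simp at hm
  | x :: xs =>
    obtain ⟨M, hMdef⟩ : ∃ M, M = (x :: xs).foldr max 0 := ⟨_, rfl⟩
    have hM : M ∈ x :: xs := by rw [hMdef]; exact foldrMaxMem x xs
    have hle : ∀ y ∈ x :: xs, y ≤ M := by
      intro y hy; rw [hMdef]; exact le_foldr_max _ y hy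
    obtain ⟨T, hTdef⟩ : ∃ T, T = (x :: xs).takeWhile (fun y => y ≠ M) := ⟨_, rfl⟩
    obtain ⟨D, hDdef⟩ : ∃ D, D = ((x :: xs).dropWhile (fun y => y ≠ M)).drop 1 := ⟨_, rfl⟩
    have hsplit : x :: xs = T ++ M :: D := by
      rw [hTdef, hDdef]
      conv_lhs => rw [← List.takeWhile_append_dropWhile (p := fun y => y ≠ M) (l := x :: xs),
        dropWhile_ne_eq _ _ hM]
    have hTlen : T.length ≤ n := by
      rw [hTdef]
      have := takeWhileLt (x :: xs) M hM
      simp only [List.length_cons] at *; omega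
    have hDlen : D.length ≤ n := by
      rw [hDdef]
      have := dropWhileDropLt (x :: xs) M (by simp)
      simp only [List.length_cons] at *; omega
    have hndTMD : (T ++ M :: D).Nodup := hsplit ▸ hnd
    have hMnT : M ∉ T := by
      have := List.disjoint_of_nodup_append hndTMD
      exact fun h => this h (List.mem_cons_self)
    have hMnD : M ∉ D := by
      have := (List.nodup_append.mp hndTMD).2.1
      exact (List.nodup_cons.mp this).1
    have hTnd : T.Nodup := (List.nodup_append.mp hndTMD).1
    have hDnd : D.Nodup := (List.nodup_cons.mp (List.nodup_append.mp hndTMD).2.1).2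
    have hssl : ss (x :: xs) = ss T ++ ss D ++ [M] := by
      rw [hTdef, hDdef, hMdef]; exact ss_eq x xs
    have hTperm : (ss T).Perm T := ss_perm T
    have hDperm : (ss D).Perm D := ss_perm D
    have hmem : m ∈ T ∨ m = M ∨ m ∈ D := by
      rw [hsplit] at hm
      rcases List.mem_append.mp hm with h | h
      · exact Or.inl h
      · rcases List.mem_cons.mp h with h | h
        · exact Or.inr (Or.inl h)
        · exact Or.inr (Or.inr h)
    rcases hmem with hmT | hmM | hmD
    · -- m ∈ T
      obtain ⟨A, B, hTAB, hmA⟩ := mem_decomp m T hmT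
      have hlAB : x :: xs = A ++ m :: (B ++ M :: D) := by
        rw [hsplit, hTAB]; simp
      have hmnA : m ∉ A := hmA
      have hGl := (good_iff m (x :: xs) A (B ++ M :: D) hlAB hmnA).mp hG
      have hsortBMD : List.Pairwise (· < ·) (B ++ M :: D) := hGl.1
      have hDnil : D = [] := by
        rcases List.eq_nil_or_concat D with h | ⟨ds, d, h⟩
        · exact h
        · exfalso
          rw [List.concat_eq_append] at h
          rw [h] at hsortBMD hsplit
          have hsub : (M :: (ds ++ [d])).Pairwise (· < ·) :=
            hsortBMD.sublist (List.sublist_append_right _ _)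
          have h1 : M < d := List.rel_of_pairwise_cons hsub (show d ∈ ds ++ [d] by simp)
          have h2 : d ≤ M := by
            apply hle; rw [hsplit]
            exact List.mem_append.mpr (Or.inr (by simp))
          omega
      subst hDnil
      have hGT : Good m T := by
        rw [good_iff m T A B hTAB hmnA]
        constructor
        · have := hsortBMD
          rw [List.pairwise_append] at this
          exact this.1
        · intro y hy; exact hGl.2 y (List.mem_append.mpr (Or.inl hy))
      have hGsT := ih T hTlen hTnd m hmT hGT
      have hmssT : m ∈ ss T := hTperm.mem_iff.mpr hmT
      obtain ⟨A', B', hsTAB, hmA'⟩ := mem_decomp m (ss T) hmssT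
      have hGsT' := (good_iff m (ss T) A' B' hsTAB hmA').mp hGsT
      have hssl' : ss (x :: xs) = A' ++ m :: (B' ++ [M]) := by
        rw [hssl, hsTAB]; simp [ss]
      rw [good_iff m _ A' (B' ++ [M]) hssl' hmA']
      have hB'lt : ∀ y ∈ B', y < M := by
        intro y hy
        have hyT : y ∈ T := hTperm.mem_iff.mp (by rw [hsTAB]; simp [hy])
        have : y ≤ M := hle y (by rw [hsplit]; exact List.mem_append.mpr (Or.inl hyT))
        have : y ≠ M := fun h => hMnT (h ▸ hyT)
        omega
      constructor
      · rw [List.pairwise_append]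
        exact ⟨hGsT'.1, List.pairwise_singleton _ M, fun y hy z hz => by
          rw [List.mem_singleton] at hz; exact hz ▸ hB'lt y hy⟩
      · intro y hy
        rcases List.mem_append.mp hy with h | h
        · exact hGsT'.2 y h
        · rw [List.mem_singleton] at h
          rw [h]
          have h1 : m ≤ M := hle m hm
          have h2 : m ≠ M := fun h => hMnT (h ▸ hmT)
          omega
    · -- m = M
      rw [hmM] at hG ⊢
      have hGl := (good_iff M (x :: xs) T D hsplit hMnT).mp hG
      have hDnil : D = [] := by
        rcases List.eq_nil_or_concat D with h | ⟨ds, d, h⟩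
        · exact h
        · exfalso
          rw [List.concat_eq_append] at h
          rw [h] at hGl hsplit
          have h1 : M < d := hGl.2 d (by simp)
          have h2 : d ≤ M := hle d (by rw [hsplit]; exact List.mem_append.mpr (Or.inr (by simp)))
          omega
      subst hDnil
      have hMnssT : M ∉ ss T := fun h => hMnT (hTperm.mem_iff.mp h)
      have hssl' : ss (x :: xs) = ss T ++ M :: [] := by rw [hssl]; simp [ss]
      rw [good_iff M _ (ss T) [] hssl' hMnssT]
      exact ⟨List.Pairwise.nil, by simp⟩
    · -- m ∈ D
      obtain ⟨A, B, hDAB, hmA⟩ := mem_decomp m D hmD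
      have hlAB : x :: xs = (T ++ M :: A) ++ m :: B := by
        rw [hsplit, hDAB]; simp
      have hmnTMA : m ∉ T ++ M :: A := by
        have hnd' : ((T ++ M :: A) ++ m :: B).Nodup := hlAB ▸ hnd
        have := List.disjoint_of_nodup_append hnd'
        exact fun h => this h (List.mem_cons_self)
      have hGl := (good_iff m (x :: xs) (T ++ M :: A) B hlAB hmnTMA).mp hG
      have hGD : Good m D := by
        rw [good_iff m D A B hDAB hmA]
        exact hGl
      have hGsD := ih D hDlen hDnd m hmD hGD
      have hmssD : m ∈ ss D := hDperm.mem_iff.mpr hmD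
      obtain ⟨A', B', hsDAB, hmA'⟩ := mem_decomp m (ss D) hmssD
      have hGsD' := (good_iff m (ss D) A' B' hsDAB hmA').mp hGsD
      have hssl' : ss (x :: xs) = (ss T ++ A') ++ m :: (B' ++ [M]) := by
        rw [hssl, hsDAB]; simp
      have hmnX : m ∉ ss T ++ A' := by
        intro h
        rcases List.mem_append.mp h with h | h
        · exact hmnTMA (List.mem_append.mpr (Or.inl (hTperm.mem_iff.mp h)))
        · exact hmA' h
      rw [good_iff m _ (ss T ++ A') (B' ++ [M]) hssl' hmnX]
      have hB'lt : ∀ y ∈ B', y < M := by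
        intro y hy
        have hyD : y ∈ D := hDperm.mem_iff.mp (by rw [hsDAB]; simp [hy])
        have h1 : y ≤ M := hle y (by rw [hsplit]; exact List.mem_append.mpr (Or.inr (by simp [hyD])))
        have h2 : y ≠ M := fun h => hMnD (h ▸ hyD)
        omega
      constructor
      · rw [List.pairwise_append]
        exact ⟨hGsD'.1, List.pairwise_singleton _ M, fun y hy z hz => by
          rw [List.mem_singleton] at hz; exact hz ▸ hB'lt y hy⟩
      · intro y hy
        rcases List.mem_append.mp hy with h | h
        · exact hGsD'.2 y h
        · rw [List.mem_singleton] at h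
          rw [h]
          have h1 : m ≤ M := hle m hm
          have h2 : m ≠ M := fun h => hMnD (h ▸ hmD)
          omega

end SSAux

/-- Lemma 5.1: the part of `s^k(π)` strictly to the right of the last entry `π_n` of `π`
is increasing and all its entries exceed `π_n`. -/
theorem stmt_2 (n : ℕ) (hn : 1 ≤ n) (π : List ℕ) (hlen : π.length = n) (hnd : π.Nodup)
    (k : ℕ) :
    List.Pairwise (· < ·)
      ((ss^[k] π).drop ((ss^[k] π).idxOf ((π.getLast?).getD 0) + 1)) ∧
    ∀ x ∈ (ss^[k] π).drop ((ss^[k] π).idxOf ((π.getLast?).getD 0) + 1),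
      (π.getLast?).getD 0 < x := by
  have hne : π ≠ [] := by
    intro h; rw [h] at hlen; simp at hlen; omega
  have hm : (π.getLast?).getD 0 = π.getLast hne := by
    rw [List.getLast?_eq_getLast hne]; rfl
  have hdec : π = π.dropLast ++ [π.getLast hne] := (List.dropLast_append_getLast hne).symm
  have hmem : π.getLast hne ∈ π := List.getLast_mem hne
  have hmnd : π.getLast hne ∉ π.dropLast := by
    have hnd' : (π.dropLast ++ [π.getLast hne]).Nodup := hdec ▸ hnd
    have := List.disjoint_of_nodup_append hnd'
    exact fun h => this h (List.mem_cons_self)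
  have hbase : SSAux.Good (π.getLast hne) π := by
    rw [SSAux.good_iff (π.getLast hne) π π.dropLast [] hdec hmnd]
    exact ⟨List.Pairwise.nil, by simp⟩
  have hmain : ∀ j : ℕ, (ss^[j] π).Perm π ∧ SSAux.Good (π.getLast hne) (ss^[j] π) := by
    intro j
    induction j with
    | zero => exact ⟨List.Perm.refl _, hbase⟩
    | succ j ih =>
      rw [Function.iterate_succ_apply']
      refine ⟨(SSAux.ss_perm _).trans ih.1, ?_⟩
      exact SSAux.key_aux (ss^[j] π).length _ le_rfl (ih.1.nodup_iff.mpr hnd)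
        _ (ih.1.mem_iff.mpr hmem) ih.2
  rw [hm]
  exact (hmain k).2
end

section
/- For all π ∈ S_n', the sets {c_{π,i,j} : 1 ≤ j ≤ |C_{π,i}|}, for 1 ≤ i ≤ met(π), are pairwise disjoint and their union equals {1, 2, ..., n}. -/
section
namespace S8

lemma le_foldrMax {l : List ℕ} {y : ℕ} (h : y ∈ l) : y ≤ l.foldr max 0 := by
  induction l with
  | nil => simp at h
  | cons x xs ih =>
    rcases List.mem_cons.mp h with rfl | h
    · exact le_max_left _ _
    · exact le_trans (ih h) (le_max_right _ _)

lemma foldrMax_le {l : List ℕ} {m : ℕ} (h : ∀ y ∈ l, y ≤ m) : l.foldr max 0 ≤ m := by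
  induction l with
  | nil => simp
  | cons x xs ih =>
    simp only [List.foldr_cons]
    exact max_le (h x (by simp)) (ih fun y hy => h y (by simp [hy]))

lemma foldrMax_eq {l : List ℕ} {m : ℕ} (hm : m ∈ l) (h : ∀ y ∈ l, y ≤ m) :
    l.foldr max 0 = m :=
  le_antisymm (foldrMax_le h) (le_foldrMax hm)

lemma takeWhile_first {L R : List ℕ} {m : ℕ} (hL : ∀ y ∈ L, y ≠ m) :
    ((L ++ m :: R).takeWhile (fun y => y ≠ m)) = L := by
  induction L with
  | nil => simp [List.takeWhile]
  | cons x xs ih =>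
    have hx : x ≠ m := hL x (by simp)
    have ih' := ih fun y hy => hL y (by simp [hy])
    simp only [List.cons_append, List.takeWhile_cons]
    simp only [ne_eq, decide_not] at ih' ⊢
    simp [hx, ih']

lemma dropWhile_first {L R : List ℕ} {m : ℕ} (hL : ∀ y ∈ L, y ≠ m) :
    ((L ++ m :: R).dropWhile (fun y => y ≠ m)) = m :: R := by
  induction L with
  | nil => simp [List.dropWhile]
  | cons x xs ih =>
    have hx : x ≠ m := hL x (by simp)
    have ih' := ih fun y hy => hL y (by simp [hy])
    simp only [List.cons_append, List.dropWhile_cons]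
    simp only [ne_eq, decide_not] at ih' ⊢
    simp [hx, ih']
lemma ss_nil : ss [] = [] := by rw [ss]

lemma ss_eq (l : List ℕ) (h : l ≠ []) :
    ss l = ss (l.takeWhile (fun y => y ≠ l.foldr max 0)) ++
      ss ((l.dropWhile (fun y => y ≠ l.foldr max 0)).drop 1) ++ [l.foldr max 0] := by
  cases l with
  | nil => exact absurd rfl h
  | cons x xs => rw [ss]

lemma dropWhile_cons_of_mem {l : List ℕ} {m : ℕ} (hm : m ∈ l) :
    l.dropWhile (fun y => y ≠ m) = m :: (l.dropWhile (fun y => y ≠ m)).drop 1 := by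
  have hd : l.dropWhile (fun y => y ≠ m) ≠ [] := by
    intro h; rw [List.dropWhile_eq_nil_iff] at h; simpa using h m hm
  have hh := List.head_dropWhile_not (fun y => decide (y ≠ m)) hd
  have : (l.dropWhile (fun y => y ≠ m)).head hd = m := by
    simpa using hh
  conv_lhs => rw [← List.cons_head_tail hd]
  rw [this, List.drop_one]

theorem ss_perm : ∀ l : List ℕ, (ss l).Perm l
  | [] => by rw [ss]
  | x :: xs => by
    have hT := ss_perm ((x :: xs).takeWhile (fun y => y ≠ (x :: xs).foldr max 0))
    have hD := ss_perm (((x :: xs).dropWhile (fun y => y ≠ (x :: xs).foldr max 0)).drop 1)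
    rw [ss_eq (x :: xs) (by simp)]
    set m := (x :: xs).foldr max 0 with hm
    set T := (x :: xs).takeWhile (fun y => y ≠ m) with hTdef
    set D := ((x :: xs).dropWhile (fun y => y ≠ m)).drop 1 with hDdef
    have hsplit : T ++ m :: D = x :: xs := by
      rw [hTdef, hDdef, ← dropWhile_cons_of_mem (foldrMaxMem x xs)]
      exact List.takeWhile_append_dropWhile
    have p1 : (ss T ++ ss D ++ [m]).Perm (T ++ D ++ [m]) :=
      (hT.append hD).append (List.Perm.refl _)
    have p2 : (T ++ D ++ [m]).Perm (T ++ m :: D) := by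
      rw [List.append_assoc]
      exact List.Perm.append_left _ (by simpa using List.perm_append_comm (l₁ := D) (l₂ := [m]))
    exact (p1.trans p2).trans (by rw [hsplit])
termination_by l => l.length
decreasing_by
  · exact takeWhileLt _ _ (foldrMaxMem _ _)
  · exact dropWhileDropLt _ _ (by simp)

lemma ss_split {L R : List ℕ} {m : ℕ} (hL : ∀ y ∈ L, y ≠ m)
    (hmax : ∀ y ∈ L ++ m :: R, y ≤ m) :
    ss (L ++ m :: R) = ss L ++ ss R ++ [m] := by
  have hm : (L ++ m :: R).foldr max 0 = m := foldrMax_eq (by simp) hmax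
  rw [ss_eq _ (by simp), hm, takeWhile_first hL, dropWhile_first hL]
  simp

lemma foldrMax_mem {l : List ℕ} (h : l ≠ []) : l.foldr max 0 ∈ l := by
  cases l with
  | nil => exact absurd rfl h
  | cons x xs => exact foldrMaxMem x xs

lemma rtlMax_nil : rtlMax [] = [] := by rw [rtlMax]

lemma rtlMax_subset : ∀ {l : List ℕ} {v : ℕ}, v ∈ rtlMax l → v ∈ l := by
  intro l
  induction l with
  | nil => intro v h; rw [rtlMax_nil] at h; exact absurd h (List.not_mem_nil)
  | cons x xs ih =>
    intro v h
    rw [rtlMax] at h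
    by_cases hx : ∀ y ∈ xs, y < x
    · rw [if_pos hx] at h
      rcases List.mem_cons.mp h with rfl | h
      · exact List.mem_cons_self
      · exact List.mem_cons_of_mem _ (ih h)
    · rw [if_neg hx] at h
      exact List.mem_cons_of_mem _ (ih h)

lemma rtlMax_cons_max {x : ℕ} {xs : List ℕ} (h : ∀ y ∈ xs, y < x) :
    rtlMax (x :: xs) = x :: rtlMax xs := by
  rw [rtlMax, if_pos h]

lemma rtlMax_append {L M : List ℕ} {m : ℕ} (hm : m ∈ M) (h : ∀ y ∈ L, y < m) :
    rtlMax (L ++ M) = rtlMax M := by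
  induction L with
  | nil => simp
  | cons x xs ih =>
    have hnot : ¬ ∀ y ∈ xs ++ M, y < x := by
      intro hall
      exact absurd (hall m (by simp [hm])) (not_lt.mpr (le_of_lt (h x (by simp))))
    rw [List.cons_append, rtlMax, if_neg hnot]
    exact ih fun y hy => h y (by simp [hy])

lemma rtlMax_ne_nil : ∀ {l : List ℕ}, l ≠ [] → rtlMax l ≠ [] := by
  intro l
  induction l with
  | nil => intro h; exact absurd rfl h
  | cons x xs ih =>
    intro _
    rw [rtlMax]
    by_cases hx : ∀ y ∈ xs, y < x
    · rw [if_pos hx]; simp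
    · rw [if_neg hx]
      push_neg at hx
      obtain ⟨y, hy, -⟩ := hx
      exact ih (List.ne_nil_of_mem hy)

lemma sorted_append_singleton {l : List ℕ} {m : ℕ} (hs : l.Pairwise (· < ·))
    (h : ∀ x ∈ l, x < m) : (l ++ [m]).Pairwise (· < ·) := by
  rw [List.pairwise_append]
  exact ⟨hs, List.pairwise_singleton _ _, fun a ha b hb => by
    rw [List.mem_singleton] at hb; subst hb; exact h a ha⟩

lemma main : ∀ (N : ℕ) (σ A B : List ℕ), σ.length ≤ N → σ = A ++ 0 :: B → σ.Nodup →
    (∀ x ∈ B, x ≠ 0) → B.Pairwise (· < ·) →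
    ∃ A' B', ss σ = A' ++ 0 :: B' ∧ (∀ x ∈ A', x ≠ 0) ∧ (∀ x ∈ B', x ≠ 0) ∧
      B'.Pairwise (· < ·) ∧ (∀ v, v ∈ A' ↔ v ∈ A ∧ v ∉ rtlMax A) ∧
      (∀ v, v ∈ B' ↔ v ∈ B ∨ v ∈ rtlMax A) := by
  intro N
  induction N with
  | zero =>
    intro σ A B hlen hσ
    exfalso; subst hσ; simp at hlen
  | succ N ih =>
    intro σ A B hlen hσ hnd hB0 hBs
    subst hσ
    obtain ⟨m, hmdef⟩ : ∃ m, (A ++ 0 :: B).foldr max 0 = m := ⟨_, rfl⟩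
    have hmem : m ∈ A ++ 0 :: B := hmdef ▸ foldrMax_mem (by simp)
    have hle : ∀ y ∈ A ++ 0 :: B, y ≤ m := fun y hy => hmdef ▸ le_foldrMax hy
    have hndA : A.Nodup := (List.nodup_append'.mp hnd).1
    have hnd0B : (0 :: B).Nodup := (List.nodup_append'.mp hnd).2.1
    have hdisj : ∀ y ∈ A, y ∉ (0 :: B) := fun y hy => (List.nodup_append'.mp hnd).2.2 hy
    have h0A : (0 : ℕ) ∉ A := fun h => hdisj 0 h (by simp)
    by_cases hm0 : m = 0
    · -- everything ≤ 0, so σ = [0]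
      have hA : A = [] := by
        apply List.eq_nil_iff_forall_not_mem.mpr
        intro a ha
        have := hle a (by simp [ha])
        have ha0 : a = 0 := by omega
        exact h0A (ha0 ▸ ha)
      have hB : B = [] := by
        apply List.eq_nil_iff_forall_not_mem.mpr
        intro b hb
        have := hle b (by simp [hb])
        exact hB0 b hb (by omega)
      subst hA; subst hB
      refine ⟨[], [], ?_, by simp, by simp, List.Pairwise.nil, by simp [rtlMax_nil], by simp [rtlMax_nil]⟩
      have h1 : ss ([] ++ 0 :: ([] : List ℕ)) = ss [0] := by simp
      rw [h1, ss_eq [0] (by simp)]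
      norm_num [ss_nil]
    · have hmAB : m ∈ A ∨ m ∈ B := by
        rcases List.mem_append.mp hmem with h | h
        · exact Or.inl h
        · rcases List.mem_cons.mp h with h | h
          · exact absurd h hm0
          · exact Or.inr h
      rcases hmAB with hmA | hmB
      · -- m in A
        obtain ⟨L, A₂, rfl⟩ := List.append_of_mem hmA
        have hndL : L.Nodup := (List.nodup_append'.mp hndA).1
        have hndmA₂ : (m :: A₂).Nodup := (List.nodup_append'.mp hndA).2.1
        have hdisjL : ∀ y ∈ L, y ∉ (m :: A₂) := fun y hy => (List.nodup_append'.mp hndA).2.2 hy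
        have hLm : ∀ y ∈ L, y ≠ m := fun y hy h => hdisjL y hy (h ▸ List.mem_cons_self)
        have hmA₂ : m ∉ A₂ := (List.nodup_cons.mp hndmA₂).1
        have hassoc : (L ++ m :: A₂) ++ 0 :: B = L ++ m :: (A₂ ++ 0 :: B) := by simp
        have hss : ss ((L ++ m :: A₂) ++ 0 :: B) = ss L ++ ss (A₂ ++ 0 :: B) ++ [m] := by
          rw [hassoc]
          exact ss_split hLm (fun y hy => hle y (by rw [hassoc]; exact hy))
        have hlen2 : (A₂ ++ 0 :: B).length ≤ N := by
          simp only [List.length_append, List.length_cons] at hlen ⊢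
          omega
        have hnd2 : (A₂ ++ 0 :: B).Nodup := by
          have : (m :: (A₂ ++ 0 :: B)).Nodup := by
            have := hnd; rw [hassoc] at this
            exact List.Nodup.of_append_right this
          exact (List.nodup_cons.mp this).2
        obtain ⟨A₂', B₂', hss2, hA₂'0, hB₂'0, hB₂'s, hmemA₂', hmemB₂'⟩ :=
          ih (A₂ ++ 0 :: B) A₂ B hlen2 rfl hnd2 hB0 hBs
        -- facts about strict bounds
        have hltm : ∀ y ∈ (L ++ m :: A₂) ++ 0 :: B, y ≠ m → y < m := fun y hy hne =>
          lt_of_le_of_ne (hle y hy) hne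
        have hrtl : rtlMax (L ++ m :: A₂) = m :: rtlMax A₂ := by
          rw [rtlMax_append (List.mem_cons_self)
            (fun y hy => hltm y (by simp [hy]) (hLm y hy))]
          exact rtlMax_cons_max (fun y hy => hltm y (by simp [hy])
            (fun h => hmA₂ (h ▸ hy)))
        have hmB' : m ∉ B := fun h => hdisj m (by simp) (by simp [h])
        refine ⟨ss L ++ A₂', B₂' ++ [m], ?_, ?_, ?_, ?_, ?_, ?_⟩
        · rw [hss, hss2]; simp
        · intro x hx
          rcases List.mem_append.mp hx with hx | hx
          · have hxL : x ∈ L := (ss_perm L).mem_iff.mp hx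
            intro h; subst h; exact h0A (by simp [hxL])
          · have := (hmemA₂' x).mp hx
            intro h; subst h; exact h0A (by simp [this.1])
        · intro x hx
          rcases List.mem_append.mp hx with hx | hx
          · exact hB₂'0 x hx
          · rw [List.mem_singleton] at hx; subst hx; exact hm0
        · apply sorted_append_singleton hB₂'s
          intro x hx
          rcases (hmemB₂' x).mp hx with hx | hx
          · exact hltm x (by simp [hx]) (fun h => hmB' (h ▸ hx))
          · have hxA₂ : x ∈ A₂ := rtlMax_subset hx
            exact hltm x (by simp [hxA₂]) (fun h => hmA₂ (h ▸ hxA₂))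
        · intro v
          rw [hrtl]
          constructor
          · intro hv
            rcases List.mem_append.mp hv with hv | hv
            · have hvL : v ∈ L := (ss_perm L).mem_iff.mp hv
              refine ⟨by simp [hvL], ?_⟩
              intro hcon
              rcases List.mem_cons.mp hcon with rfl | hcon
              · exact hLm v hvL rfl
              · exact hdisjL v hvL (List.mem_cons_of_mem _ (S8.rtlMax_subset hcon))
            · have := (hmemA₂' v).mp hv
              refine ⟨by simp [this.1], ?_⟩
              intro hcon
              rcases List.mem_cons.mp hcon with rfl | hcon
              · exact hmA₂ this.1
              · exact this.2 hcon
          · rintro ⟨hv, hnot⟩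
            have hvne : v ≠ m := fun h => hnot (h ▸ List.mem_cons_self)
            rcases List.mem_append.mp hv with hv | hv
            · exact List.mem_append.mpr (Or.inl ((ss_perm L).mem_iff.mpr hv))
            · rcases List.mem_cons.mp hv with rfl | hv
              · exact absurd rfl hvne
              · refine List.mem_append.mpr (Or.inr ((hmemA₂' v).mpr ⟨hv, ?_⟩))
                intro hcon
                exact hnot (List.mem_cons_of_mem _ hcon)
        · intro v
          rw [hrtl]
          constructor
          · intro hv
            rcases List.mem_append.mp hv with hv | hv
            · rcases (hmemB₂' v).mp hv with hv | hv
              · exact Or.inl hv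
              · exact Or.inr (List.mem_cons_of_mem _ hv)
            · rw [List.mem_singleton] at hv; subst hv
              exact Or.inr (List.mem_cons_self)
          · intro hv
            rcases hv with hv | hv
            · exact List.mem_append.mpr (Or.inl ((hmemB₂' v).mpr (Or.inl hv)))
            · rcases List.mem_cons.mp hv with rfl | hv
              · exact List.mem_append.mpr (Or.inr (by simp))
              · exact List.mem_append.mpr (Or.inl ((hmemB₂' v).mpr (Or.inr hv)))
      · -- m in B
        obtain ⟨B₁, B₂, rfl⟩ := List.append_of_mem hmB
        have hB₂nil : B₂ = [] := by
          apply List.eq_nil_iff_forall_not_mem.mpr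
          intro b hb
          have h1 : m < b := by
            have := hBs
            rw [List.pairwise_append] at this
            exact (List.pairwise_cons.mp this.2.1).1 b hb
          have h2 : b ≤ m := hle b (by simp [hb])
          omega
        subst hB₂nil
        have hassoc : A ++ 0 :: (B₁ ++ m :: []) = (A ++ 0 :: B₁) ++ m :: [] := by simp
        have hndX : ((A ++ 0 :: B₁) ++ m :: []).Nodup := by rw [← hassoc]; exact hnd
        have hXm : ∀ y ∈ A ++ 0 :: B₁, y ≠ m := by
          intro y hy h
          subst h
          exact (List.nodup_append'.mp hndX).2.2 hy (by simp)
        have hss : ss (A ++ 0 :: (B₁ ++ m :: [])) = ss (A ++ 0 :: B₁) ++ [m] := by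
          rw [hassoc, ss_split hXm (fun y hy => hle y (by rw [hassoc]; exact hy)), ss_nil]
          simp
        have hlen2 : (A ++ 0 :: B₁).length ≤ N := by
          simp only [List.length_append, List.length_cons] at hlen ⊢
          omega
        have hnd2 : (A ++ 0 :: B₁).Nodup := List.Nodup.of_append_left hndX
        have hB₁0 : ∀ x ∈ B₁, x ≠ 0 := fun x hx => hB0 x (by simp [hx])
        have hB₁s : B₁.Pairwise (· < ·) := by
          rw [List.pairwise_append] at hBs
          exact hBs.1
        obtain ⟨A', B₁', hss2, hA'0, hB₁'0, hB₁'s, hmemA', hmemB₁'⟩ :=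
          ih (A ++ 0 :: B₁) A B₁ hlen2 rfl hnd2 hB₁0 hB₁s
        have hmA : m ∉ A := fun h => hXm m (by simp [h]) rfl
        have hmB₁ : m ∉ B₁ := fun h => hXm m (by simp [h]) rfl
        refine ⟨A', B₁' ++ [m], ?_, hA'0, ?_, ?_, hmemA', ?_⟩
        · rw [hss, hss2]; simp
        · intro x hx
          rcases List.mem_append.mp hx with hx | hx
          · exact hB₁'0 x hx
          · rw [List.mem_singleton] at hx; subst hx; exact hm0
        · apply sorted_append_singleton hB₁'s
          intro x hx
          have hxne : x ≠ m := by
            rcases (hmemB₁' x).mp hx with hx | hx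
            · exact fun h => hmB₁ (h ▸ hx)
            · exact fun h => hmA (h ▸ rtlMax_subset hx)
          exact lt_of_le_of_ne (hle x (by
            rcases (hmemB₁' x).mp hx with hx | hx
            · simp [hx]
            · simp [rtlMax_subset hx])) hxne
        · intro v
          constructor
          · intro hv
            rcases List.mem_append.mp hv with hv | hv
            · rcases (hmemB₁' v).mp hv with hv | hv
              · exact Or.inl (by simp [hv])
              · exact Or.inr hv
            · rw [List.mem_singleton] at hv; subst hv
              exact Or.inl (by simp)
          · intro hv
            rcases hv with hv | hv
            · rcases List.mem_append.mp hv with hv | hv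
              · exact List.mem_append.mpr (Or.inl ((hmemB₁' v).mpr (Or.inl hv)))
              · rw [List.mem_singleton] at hv; subst hv
                exact List.mem_append.mpr (Or.inr (by simp))
            · exact List.mem_append.mpr (Or.inl ((hmemB₁' v).mpr (Or.inr hv)))

def pre (σ : List ℕ) : List ℕ := σ.takeWhile (fun x => x ≠ 0)

def Inv (σ : List ℕ) : Prop :=
  σ.Nodup ∧ ∃ B, σ = pre σ ++ 0 :: B ∧ (∀ x ∈ B, x ≠ 0) ∧ B.Pairwise (· < ·)

lemma step {σ : List ℕ} (h : Inv σ) :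
    Inv (ss σ) ∧ (∀ v, v ∈ pre (ss σ) ↔ v ∈ pre σ ∧ v ∉ rtlMax (pre σ)) := by
  obtain ⟨hnd, B, hdec, hB0, hBs⟩ := h
  obtain ⟨A', B', hss, hA'0, hB'0, hB's, hmemA', hmemB'⟩ :=
    main σ.length σ (pre σ) B le_rfl hdec hnd hB0 hBs
  have hpre : pre (ss σ) = A' := by
    rw [hss]; exact takeWhile_first hA'0
  refine ⟨⟨(ss_perm σ).nodup_iff.mpr hnd, B', by rw [hpre]; exact hss, hB'0, hB's⟩, ?_⟩
  intro v; rw [hpre]; exact hmemA' v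

section Pi

variable {n : ℕ} {π : List ℕ}

lemma pi_nodup (hπ : π.Perm (List.range (n + 1))) : π.Nodup :=
  hπ.nodup_iff.mpr (List.nodup_range)

lemma pi_decomp (hπ : π.Perm (List.range (n + 1))) (h0 : π.getLast? = some 0) :
    π = pre π ++ [0] := by
  have hne : π ≠ [] := by
    intro h; rw [h] at h0; simp at h0
  have hlast : π.getLast hne = 0 := by
    rw [List.getLast?_eq_getLast hne] at h0
    exact Option.some_injective _ h0
  have hd : π = π.dropLast ++ [0] := by
    conv_lhs => rw [← List.dropLast_append_getLast hne]
    rw [hlast]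
  have h0d : (0 : ℕ) ∉ π.dropLast := by
    intro hmem
    have hnd := pi_nodup hπ
    rw [hd] at hnd
    exact (List.nodup_append'.mp hnd).2.2 hmem (by simp)
  have hpre : pre π = π.dropLast := by
    conv_lhs => rw [hd]
    exact takeWhile_first (fun y hy h => h0d (h ▸ hy))
  rw [hpre, ← hd]

lemma Inv0 (hπ : π.Perm (List.range (n + 1))) (h0 : π.getLast? = some 0) : Inv π :=
  ⟨pi_nodup hπ, [], by simpa using pi_decomp hπ h0, by simp, List.Pairwise.nil⟩

lemma InvK (hπ : π.Perm (List.range (n + 1))) (h0 : π.getLast? = some 0) (k : ℕ) :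
    Inv (ss^[k] π) := by
  induction k with
  | zero => exact Inv0 hπ h0
  | succ k ih => rw [Function.iterate_succ_apply']; exact (step ih).1

/-- `Ak k = pre (ss^[k] π)` -/
lemma memA_succ (hπ : π.Perm (List.range (n + 1))) (h0 : π.getLast? = some 0) (k : ℕ)
    (v : ℕ) : v ∈ pre (ss^[k + 1] π) ↔
      v ∈ pre (ss^[k] π) ∧ v ∉ rtlMax (pre (ss^[k] π)) := by
  rw [Function.iterate_succ_apply']
  exact (step (InvK hπ h0 k)).2 v

lemma memA_mono (hπ : π.Perm (List.range (n + 1))) (h0 : π.getLast? = some 0) {k j : ℕ}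
    (hkj : k ≤ j) {v : ℕ} (hv : v ∈ pre (ss^[j] π)) : v ∈ pre (ss^[k] π) := by
  obtain ⟨d, rfl⟩ := Nat.exists_eq_add_of_le hkj
  induction d with
  | zero => exact hv
  | succ d ih =>
    have : k + (d + 1) = (k + d) + 1 := rfl
    rw [this] at hv
    exact ih (le_self_add) ((memA_succ hπ h0 (k + d) v).mp hv).1

lemma nodupA (hπ : π.Perm (List.range (n + 1))) (h0 : π.getLast? = some 0) (k : ℕ) :
    (pre (ss^[k] π)).Nodup :=
  (List.takeWhile_sublist _).nodup (InvK hπ h0 k).1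

lemma lenA_lt (hπ : π.Perm (List.range (n + 1))) (h0 : π.getLast? = some 0) (k : ℕ)
    (hne : pre (ss^[k] π) ≠ []) :
    (pre (ss^[k + 1] π)).length < (pre (ss^[k] π)).length := by
  classical
  obtain ⟨x, hx⟩ := List.exists_mem_of_ne_nil _ (rtlMax_ne_nil hne)
  have hx1 : x ∈ pre (ss^[k] π) := rtlMax_subset hx
  have hx2 : x ∉ pre (ss^[k + 1] π) := fun h => ((memA_succ hπ h0 k x).mp h).2 hx
  have hsub : (pre (ss^[k + 1] π)).toFinset ⊆ (pre (ss^[k] π)).toFinset := by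
    intro y hy
    rw [List.mem_toFinset] at hy ⊢
    exact ((memA_succ hπ h0 k y).mp hy).1
  have hcard := Finset.card_lt_card ((Finset.ssubset_iff_of_subset hsub).mpr
    ⟨x, List.mem_toFinset.mpr hx1, fun h => hx2 (List.mem_toFinset.mp h)⟩)
  rwa [List.toFinset_card_of_nodup (nodupA hπ h0 (k + 1)),
    List.toFinset_card_of_nodup (nodupA hπ h0 k)] at hcard

lemma exists_empty (hπ : π.Perm (List.range (n + 1))) (h0 : π.getLast? = some 0) :
    ∃ k, pre (ss^[k] π) = [] := by
  suffices h : ∀ c k, (pre (ss^[k] π)).length ≤ c → ∃ j, pre (ss^[j] π) = [] by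
    exact h (pre (ss^[0] π)).length 0 le_rfl
  intro c
  induction c with
  | zero => intro k hk; exact ⟨k, List.eq_nil_of_length_eq_zero (Nat.le_zero.mp hk)⟩
  | succ c ih =>
    intro k hk
    by_cases hne : pre (ss^[k] π) = []
    · exact ⟨k, hne⟩
    · exact ih (k + 1) (by have := lenA_lt hπ h0 k hne; omega)

lemma sorted_of_empty (hπ : π.Perm (List.range (n + 1))) (h0 : π.getLast? = some 0)
    (k : ℕ) (he : pre (ss^[k] π) = []) : (ss^[k] π).Pairwise (· < ·) := by
  obtain ⟨hnd, B, hdec, hB0, hBs⟩ := InvK hπ h0 k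
  rw [he, List.nil_append] at hdec
  rw [hdec]
  exact List.pairwise_cons.mpr ⟨fun b hb => Nat.pos_of_ne_zero (hB0 b hb), hBs⟩

lemma perm_iter (hπ : π.Perm (List.range (n + 1))) (k : ℕ) :
    (ss^[k] π).Perm (List.range (n + 1)) := by
  induction k with
  | zero => exact hπ
  | succ k ih => rw [Function.iterate_succ_apply']; exact (ss_perm _).trans ih

lemma empty_of_sorted (hπ : π.Perm (List.range (n + 1))) (k : ℕ)
    (hs : (ss^[k] π).Pairwise (· < ·)) : pre (ss^[k] π) = [] := by
  haveI : Std.Antisymm (α := ℕ) (· < ·) := ⟨fun a b h1 h2 => absurd h2 (lt_asymm h1)⟩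
  have heq : ss^[k] π = List.range (n + 1) :=
    List.Perm.eq_of_pairwise' hs List.pairwise_lt_range (perm_iter hπ k)
  rw [pre, heq, List.range_succ_eq_map]
  simp [List.takeWhile]

end Pi

end S8
end
/-- Corollary 3.4: the sets `{c_{π,i,j} : 1 ≤ j ≤ |C_{π,i}|}`, `1 ≤ i ≤ met(π)`, are
pairwise disjoint with union `{1, …, n}`. -/
theorem stmt_8 (n : ℕ) (π : List ℕ) (hπ : π.Perm (List.range (n + 1)))
    (h0 : π.getLast? = some 0) :
    (∀ i₁ i₂, 1 ≤ i₁ → i₁ ≤ met π → 1 ≤ i₂ → i₂ ≤ met π → i₁ ≠ i₂ →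
      ∀ v ∈ colSeqAt π i₁, v ∉ colSeqAt π i₂) ∧
    (∀ v, (∃ i, 1 ≤ i ∧ i ≤ met π ∧ v ∈ colSeqAt π i) ↔ (1 ≤ v ∧ v ≤ n)) := by
  classical
  have hcol : ∀ i : ℕ, colSeqAt π i = rtlMax (S8.pre (ss^[i - 1] π)) := fun i => rfl
  constructor
  · have key : ∀ a b : ℕ, 1 ≤ a → a < b →
        ∀ v, v ∈ colSeqAt π a → v ∈ colSeqAt π b → False := by
      intro a b ha hab v hva hvb
      rw [hcol] at hva hvb
      have h1 : v ∉ S8.pre (ss^[a] π) := by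
        intro hv
        have ha1 : a - 1 + 1 = a := by omega
        have hiff := S8.memA_succ hπ h0 (a - 1) v
        rw [ha1] at hiff
        exact (hiff.mp hv).2 hva
      exact h1 (S8.memA_mono hπ h0 (by omega : a ≤ b - 1) (S8.rtlMax_subset hvb))
    intro i₁ i₂ h11 _ h21 _ hne v hv1 hv2
    rcases Nat.lt_or_ge i₁ i₂ with h | h
    · exact key i₁ i₂ h11 h v hv1 hv2
    · exact key i₂ i₁ h21 (by omega) v hv2 hv1
  · intro v
    constructor
    · rintro ⟨i, hi1, -, hv⟩
      rw [hcol] at hv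
      have h1 : v ∈ S8.pre (ss^[0] π) :=
        S8.memA_mono hπ h0 (Nat.zero_le _) (S8.rtlMax_subset hv)
      rw [Function.iterate_zero_apply] at h1
      have hvne : v ≠ 0 := by simpa using List.mem_takeWhile_imp h1
      have hvπ : v ∈ π := (List.takeWhile_sublist _).subset h1
      have hvr : v ∈ List.range (n + 1) := hπ.mem_iff.mp hvπ
      rw [List.mem_range] at hvr
      omega
    · rintro ⟨hv1, hvn⟩
      have hvπ : v ∈ π := hπ.mem_iff.mpr (List.mem_range.mpr (by omega))
      have hv0 : v ∈ S8.pre (ss^[0] π) := by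
        rw [Function.iterate_zero_apply]
        have hd := S8.pi_decomp hπ h0
        rw [hd] at hvπ
        rcases List.mem_append.mp hvπ with h | h
        · exact h
        · rw [List.mem_singleton] at h; omega
      have hS : {k | List.Pairwise (· < ·) (ss^[k] π)}.Nonempty := by
        obtain ⟨k, hk⟩ := S8.exists_empty hπ h0
        exact ⟨k, S8.sorted_of_empty hπ h0 k hk⟩
      have hmetS : List.Pairwise (· < ·) (ss^[met π] π) := Nat.sInf_mem hS
      have hmet : S8.pre (ss^[met π] π) = [] := S8.empty_of_sorted hπ (met π) hmetS
      have hPmet : v ∉ S8.pre (ss^[met π] π) := by rw [hmet]; simp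
      have Hex : ∃ k, v ∉ S8.pre (ss^[k] π) := ⟨met π, hPmet⟩
      set k₀ := Nat.find Hex with hk₀def
      have hspec : v ∉ S8.pre (ss^[k₀] π) := Nat.find_spec Hex
      have hk₀pos : k₀ ≠ 0 := by
        intro h
        rw [h] at hspec
        exact hspec hv0
      have hprev : v ∈ S8.pre (ss^[k₀ - 1] π) := by
        by_contra h
        exact Nat.find_min Hex (by omega : k₀ - 1 < k₀) h
      have hle : k₀ ≤ met π := Nat.find_min' Hex hPmet
      refine ⟨k₀, by omega, hle, ?_⟩
      rw [hcol]
      by_contra h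
      have hiff := S8.memA_succ hπ h0 (k₀ - 1) v
      have hk1 : k₀ - 1 + 1 = k₀ := by omega
      rw [hk1] at hiff
      exact hspec (hiff.mpr ⟨hprev, h⟩)
end
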